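/- arXiv:2504.21402 — 10 statements merged into one kernel-verified Lean document; each statement's English description precedes it below -/
import Mathlib

section
/- Let X be a metric space and S₁, S₂ : X → X with S₂ strongly quasi-nonexpansive, S₁ quasi-nonexpansive, and Fix(S₁) ∩ Fix(S₂) ≠ ∅. Then Fix(S₂ ∘ S₁) = Fix(S₁) ∩ Fix(S₂). -/
open Filter Metric

variable {X : Type*} [MetricSpace X]

/-- Fixed point set of a self-map. -/
def FixSet (S : X → X) : Set X := {x | S x = x}

/-- Quasi-nonexpansive: nonempty fixed point set and `dist (S x) q ≤ dist x q`
for every `x` and every fixed point `q`. -/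
def QuasiNonexpansive (S : X → X) : Prop :=
  (FixSet S).Nonempty ∧ ∀ x q, q ∈ FixSet S → dist (S x) q ≤ dist x q

/-- Strongly quasi-nonexpansive. -/
def StronglyQuasiNonexpansive (S : X → X) : Prop :=
  QuasiNonexpansive S ∧
    ∀ x : ℕ → X, Bornology.IsBounded (Set.range x) →
      ∀ q ∈ FixSet S,
        Tendsto (fun n => dist (x n) q - dist (S (x n)) q) atTop (nhds 0) →
        Tendsto (fun n => dist (x n) (S (x n))) atTop (nhds 0)

/-- Complete CAT(0) (Hadamard) space: complete and every pair of points has a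
midpoint satisfying the CN (comparison) inequality. -/
def IsHadamard (X : Type*) [MetricSpace X] : Prop :=
  CompleteSpace X ∧
    ∀ x y : X, ∃ m : X, dist x m = dist x y / 2 ∧ dist y m = dist x y / 2 ∧
      ∀ z : X, dist z m ^ 2 ≤ (dist z x ^ 2 + dist z y ^ 2) / 2 - dist x y ^ 2 / 4

/-- `z` is an asymptotic center of the bounded sequence `x`. -/
def AsympCenter (x : ℕ → X) (z : X) : Prop :=
  ∀ y : X, limsup (fun n => dist z (x n)) atTop ≤ limsup (fun n => dist y (x n)) atTop

/-- Δ-convergence: `x` is bounded and `z` is an asymptotic center of every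
subsequence of `x`. -/
def DeltaConv (x : ℕ → X) (z : X) : Prop :=
  Bornology.IsBounded (Set.range x) ∧
    ∀ φ : ℕ → ℕ, StrictMono φ → AsympCenter (x ∘ φ) z

/-- Δ-demiclosed mapping. -/
def DeltaDemiclosed (S : X → X) : Prop :=
  ∀ (x : ℕ → X) (z : X), DeltaConv x z →
    Tendsto (fun n => dist (x n) (S (x n))) atTop (nhds 0) → z ∈ FixSet S

/-- Orbital Δ-demiclosed mapping. -/
def OrbitalDeltaDemiclosed (S : X → X) : Prop :=
  ∀ (x : ℕ → X) (z : X),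
    (∃ (x0 : X) (φ : ℕ → ℕ), StrictMono φ ∧ ∀ n, x n = S^[φ n] x0) →
    DeltaConv x z →
    Tendsto (fun n => dist (x n) (S (x n))) atTop (nhds 0) → z ∈ FixSet S

/-- Composition `S (k-1) ∘ ⋯ ∘ S 0` of the first `k` mappings. -/
def compUpTo (S : ℕ → X → X) : ℕ → X → X
  | 0 => id
  | k + 1 => S k ∘ compUpTo S k

/-- A geodesically convex subset of a uniquely geodesic space: contains every
metric between-point of any two of its points. -/
def GConvex (C : Set X) : Prop :=
  ∀ x ∈ C, ∀ y ∈ C, ∀ z : X, dist x z + dist z y = dist x y → z ∈ C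

/-- Geodesic convexity of an extended-real-valued function. -/
def GConvexFun (f : X → EReal) : Prop :=
  ∀ x y z : X, ∀ t : ℝ, t ∈ Set.Icc (0 : ℝ) 1 →
    dist x z = t * dist x y → dist z y = (1 - t) * dist x y →
    f z ≤ ((1 - t : ℝ) : EReal) * f x + ((t : ℝ) : EReal) * f y

/-- Set of global minimizers. -/
def argminSet (f : X → EReal) : Set X := {x | ∀ y, f x ≤ f y}

/-- `R` is the resolvent of `f` with parameter `lam`. -/
def IsResolvent (f : X → EReal) (lam : ℝ) (R : X → X) : Prop :=
  ∀ x y : X,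
    f (R x) + (((dist x (R x)) ^ 2 / (2 * lam) : ℝ) : EReal) ≤
      f y + (((dist x y) ^ 2 / (2 * lam) : ℝ) : EReal)

theorem stmt1 {X : Type*} [MetricSpace X] (S₁ S₂ : X → X)
    (h₂ : StronglyQuasiNonexpansive S₂) (h₁ : QuasiNonexpansive S₁)
    (hInt : (FixSet S₁ ∩ FixSet S₂).Nonempty) :
    FixSet (S₂ ∘ S₁) = FixSet S₁ ∩ FixSet S₂ := by
  ext x
  constructor
  · intro hx
    obtain ⟨q, hq₁, hq₂⟩ := hInt
    have hx' : S₂ (S₁ x) = x := hx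
    have h1 : dist (S₁ x) q ≤ dist x q := h₁.2 x q hq₁
    have h2 : dist x q ≤ dist (S₁ x) q := by
      calc dist x q = dist (S₂ (S₁ x)) q := by rw [hx']
        _ ≤ dist (S₁ x) q := h₂.1.2 (S₁ x) q hq₂
    have heq : dist (S₁ x) q = dist x q := le_antisymm h1 h2
    -- apply strong quasi-nonexpansiveness with constant sequence
    have hb : Bornology.IsBounded (Set.range (fun _ : ℕ => S₁ x)) := by
      have : Set.range (fun _ : ℕ => S₁ x) ⊆ {S₁ x} := by
        rintro y ⟨n, rfl⟩; rfl
      exact (Bornology.isBounded_singleton).subset this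
    have ht : Tendsto (fun n : ℕ => dist ((fun _ : ℕ => S₁ x) n) q
        - dist (S₂ ((fun _ : ℕ => S₁ x) n)) q) atTop (nhds 0) := by
      simpa [hx', heq] using tendsto_const_nhds (x := (0 : ℝ)) (f := atTop (α := ℕ))
    have := h₂.2 (fun _ => S₁ x) hb q hq₂ ht
    have hdist : dist (S₁ x) (S₂ (S₁ x)) = 0 :=
      (tendsto_nhds_unique this tendsto_const_nhds).symm
    have hS1 : S₁ x = x := by
      rw [hx'] at hdist
      exact dist_eq_zero.mp hdist
    constructor
    · exact hS1
    · show S₂ x = x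
      calc S₂ x = S₂ (S₁ x) := by rw [hS1]
        _ = x := hx'
  · rintro ⟨hx₁, hx₂⟩
    show S₂ (S₁ x) = x
    rw [hx₁, hx₂]
end

section
/- Let X be a metric space and S₁, …, Sₘ : X → X be strongly quasi-nonexpansive mappings with ⋂ᵢ Fix(Sᵢ) ≠ ∅. Then the fixed point set of the composition Sₘ ∘ Sₘ₋₁ ∘ ⋯ ∘ S₁ equals ⋂ᵢ₌₁ᵐ Fix(Sᵢ). -/
open Filter Metric

variable {X : Type*} [MetricSpace X]

theorem stmt2 {X : Type*} [MetricSpace X] (m : ℕ) (S : ℕ → X → X)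
    (hS : ∀ i < m, StronglyQuasiNonexpansive (S i))
    (hInt : (⋂ i ∈ Finset.range m, FixSet (S i)).Nonempty) :
    FixSet (compUpTo S m) = ⋂ i ∈ Finset.range m, FixSet (S i) := by
  obtain ⟨q, hq⟩ := hInt
  have hqi : ∀ i < m, q ∈ FixSet (S i) := by
    intro i hi
    have := Set.mem_iInter₂.1 hq i (Finset.mem_range.2 hi)
    exact this
  apply Set.Subset.antisymm
  · intro x hx
    -- dist (compUpTo S k x) q is nonincreasing, equal to dist x q at k = m
    have hstep : ∀ k < m, dist (compUpTo S (k+1) x) q ≤ dist (compUpTo S k x) q := by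
      intro k hk
      have := (hS k hk).1.2 (compUpTo S k x) q (hqi k hk)
      simpa [compUpTo] using this
    have hmono : ∀ k, k ≤ m → dist (compUpTo S m x) q ≤ dist (compUpTo S k x) q := by
      intro k hk
      have key : ∀ j, k + j ≤ m → dist (compUpTo S (k+j) x) q ≤ dist (compUpTo S k x) q := by
        intro j
        induction j with
        | zero => intro _; simp
        | succ n ih =>
          intro hkn
          have h1 : k + n < m := by omega
          calc dist (compUpTo S (k+(n+1)) x) q
              ≤ dist (compUpTo S (k+n) x) q := by
                have h2 := hstep (k+n) h1
                have h3 : k + (n+1) = (k+n) + 1 := by omega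
                rw [h3]; exact h2
            _ ≤ dist (compUpTo S k x) q := ih (Nat.le_of_lt h1)
      have := key (m - k) (by omega)
      have h4 : k + (m - k) = m := by omega
      rw [h4] at this; exact this
    have hall : ∀ k, k ≤ m → dist (compUpTo S k x) q = dist x q := by
      intro k hk
      have h1 := hmono k hk
      rw [hx] at h1
      -- also dist (compUpTo S k x) q ≤ dist x q
      have h2 : ∀ j, j ≤ m → dist (compUpTo S j x) q ≤ dist x q := by
        intro j hj
        induction j with
        | zero => simp [compUpTo]
        | succ n ih =>
          have hn : n < m := Nat.lt_of_lt_of_le (Nat.lt_succ_self n) hj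
          have := (hS n hn).1.2 (compUpTo S n x) q (hqi n hn)
          calc dist (compUpTo S (n+1) x) q ≤ dist (compUpTo S n x) q := by
                simpa [compUpTo] using this
            _ ≤ dist x q := ih (Nat.le_of_lt hn)
      exact le_antisymm (h2 k hk) h1
    -- for each i < m, S i fixes compUpTo S i x
    have hfix : ∀ i < m, S i (compUpTo S i x) = compUpTo S i x := by
      intro i hi
      set y := compUpTo S i x with hy
      have hdy : dist y q - dist (S i y) q = 0 := by
        have h1 : dist y q = dist x q := hall i (Nat.le_of_lt hi)
        have h2 : dist (S i y) q = dist x q := by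
          have : S i y = compUpTo S (i+1) x := by simp [hy, compUpTo]
          rw [this]; exact hall (i+1) hi
        rw [h1, h2]; ring
      have hb : Bornology.IsBounded (Set.range (fun _ : ℕ => y)) := by
        simpa using Bornology.isBounded_singleton (x := y)
      have := (hS i hi).2 (fun _ => y) hb q (hqi i hi)
        (by simpa [hdy] using (tendsto_const_nhds :
          Tendsto (fun _ : ℕ => (0:ℝ)) atTop (nhds 0)))
      have hzero : dist y (S i y) = 0 :=
        tendsto_nhds_unique (tendsto_const_nhds) this
      exact (dist_eq_zero.1 hzero).symm
    -- hence compUpTo S k x = x for all k ≤ m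
    have hcomp : ∀ k, k ≤ m → compUpTo S k x = x := by
      intro k hk
      induction k with
      | zero => rfl
      | succ n ih =>
        have hn : n < m := Nat.lt_of_lt_of_le (Nat.lt_succ_self n) hk
        have ihn := ih (Nat.le_of_lt hn)
        have := hfix n hn
        calc compUpTo S (n+1) x = S n (compUpTo S n x) := rfl
          _ = compUpTo S n x := this
          _ = x := ihn
    refine Set.mem_iInter₂.2 ?_
    intro i hi
    have hi' := Finset.mem_range.1 hi
    have h1 : compUpTo S i x = x := hcomp i (Nat.le_of_lt hi')
    have h2 := hfix i hi'
    rw [h1] at h2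
    exact h2
  · intro x hx
    have hxi : ∀ i < m, S i x = x := fun i hi =>
      Set.mem_iInter₂.1 hx i (Finset.mem_range.2 hi)
    have : ∀ k, k ≤ m → compUpTo S k x = x := by
      intro k hk
      induction k with
      | zero => rfl
      | succ n ih =>
        have hn : n < m := Nat.lt_of_lt_of_le (Nat.lt_succ_self n) hk
        calc compUpTo S (n+1) x = S n (compUpTo S n x) := rfl
          _ = S n x := by rw [ih (Nat.le_of_lt hn)]
          _ = x := hxi n hn
    exact this m le_rfl
end

section
/- Let X be a metric space and S₁, S₂ : X → X be strongly quasi-nonexpansive mappings with Fix(S₁) ∩ Fix(S₂) ≠ ∅. Then the composition S₂ ∘ S₁ is strongly quasi-nonexpansive: for every bounded sequence (xₙ) and every q ∈ Fix(S₂ ∘ S₁) with lim (d(xₙ, q) − d(S₂ S₁ xₙ, q)) = 0, one has lim d(xₙ, S₂ S₁ xₙ) = 0, and moreover d(S₂ S₁ x, q) ≤ d(x, q) for all x and q ∈ Fix(S₂ ∘ S₁). -/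
open Filter Metric

variable {X : Type*} [MetricSpace X]

theorem stmt3 {X : Type*} [MetricSpace X] (S₁ S₂ : X → X)
    (h₁ : StronglyQuasiNonexpansive S₁) (h₂ : StronglyQuasiNonexpansive S₂)
    (hInt : (FixSet S₁ ∩ FixSet S₂).Nonempty) :
    StronglyQuasiNonexpansive (S₂ ∘ S₁) := by
  obtain ⟨p, hp₁, hp₂⟩ := hInt
  -- key: any fixed point of the composition is a fixed point of both
  have key : ∀ q ∈ FixSet (S₂ ∘ S₁), q ∈ FixSet S₁ ∧ q ∈ FixSet S₂ := by
    intro q hq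
    have hd1 : dist (S₁ q) p ≤ dist q p := h₁.1.2 q p hp₁
    have hd2 : dist q p ≤ dist (S₁ q) p := by
      have := h₂.1.2 (S₁ q) p hp₂
      simpa [show S₂ (S₁ q) = q from hq] using this
    have heq : dist q p = dist (S₁ q) p := le_antisymm hd2 hd1
    -- apply strong quasi-nonexpansiveness of S₁ to the constant sequence q
    have hbd : Bornology.IsBounded (Set.range fun _ : ℕ => q) :=
      by simpa [Set.range_const] using Bornology.isBounded_singleton (x := q)
    have htend : Tendsto (fun _ : ℕ => dist q p - dist (S₁ q) p) atTop (nhds 0) := by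
      rw [heq]; simpa using tendsto_const_nhds
    have := h₁.2 (fun _ => q) hbd p hp₁ htend
    have hq1 : S₁ q = q := by
      have h0 : dist q (S₁ q) = 0 := tendsto_nhds_unique tendsto_const_nhds this
      exact (dist_eq_zero.mp h0).symm
    refine ⟨hq1, ?_⟩
    show S₂ q = q
    calc S₂ q = S₂ (S₁ q) := by rw [hq1]
      _ = q := hq
  have hfixp : p ∈ FixSet (S₂ ∘ S₁) := by
    show S₂ (S₁ p) = p
    rw [show S₁ p = p from hp₁, show S₂ p = p from hp₂]
  constructor
  · refine ⟨⟨p, hfixp⟩, fun x q hq => ?_⟩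
    obtain ⟨hq1, hq2⟩ := key q hq
    calc dist ((S₂ ∘ S₁) x) q = dist (S₂ (S₁ x)) q := rfl
      _ ≤ dist (S₁ x) q := h₂.1.2 _ _ hq2
      _ ≤ dist x q := h₁.1.2 _ _ hq1
  · intro x hx q hq htend
    obtain ⟨hq1, hq2⟩ := key q hq
    have hle1 : ∀ n, dist (S₂ (S₁ (x n))) q ≤ dist (S₁ (x n)) q :=
      fun n => h₂.1.2 _ _ hq2
    have hle2 : ∀ n, dist (S₁ (x n)) q ≤ dist (x n) q := fun n => h₁.1.2 _ _ hq1
    -- first difference tends to 0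
    have ht1 : Tendsto (fun n => dist (x n) q - dist (S₁ (x n)) q) atTop (nhds 0) := by
      apply squeeze_zero (g := fun n => dist (x n) q - dist (S₂ (S₁ (x n))) q)
        (fun n => sub_nonneg.mpr (hle2 n)) (fun n => by have := hle1 n; linarith)
      simpa using htend
    have hx1 := h₁.2 x hx q hq1 ht1
    -- the sequence S₁ ∘ x is bounded
    obtain ⟨r, hr⟩ := hx.subset_closedBall q
    have hy : Bornology.IsBounded (Set.range fun n => S₁ (x n)) := by
      apply (Metric.isBounded_closedBall (x := q) (r := r)).subset
      rintro _ ⟨n, rfl⟩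
      have : dist (x n) q ≤ r := hr ⟨n, rfl⟩
      exact mem_closedBall.mpr ((hle2 n).trans this)
    -- second difference tends to 0
    have ht2 : Tendsto (fun n => dist (S₁ (x n)) q - dist (S₂ (S₁ (x n))) q)
        atTop (nhds 0) := by
      apply squeeze_zero (g := fun n => dist (x n) q - dist (S₂ (S₁ (x n))) q)
        (fun n => sub_nonneg.mpr (hle1 n)) (fun n => by have := hle2 n; linarith)
      simpa using htend
    have hx2 := h₂.2 (fun n => S₁ (x n)) hy q hq2 ht2
    -- conclude by triangle inequality and squeeze
    apply squeeze_zero (fun n => dist_nonneg)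
      (g := fun n => dist (x n) (S₁ (x n)) + dist (S₁ (x n)) (S₂ (S₁ (x n))))
      (fun n => dist_triangle _ _ _)
    simpa using hx1.add hx2
end

section
/- Let X be a metric space, S₁, …, Sₘ : X → X quasi-nonexpansive with common fixed point q, and (xₙ) a bounded sequence such that lim (d(xₙ, q) − d(Sₘ⋯S₁ xₙ, q)) = 0. Then for every k with 1 ≤ k ≤ m, lim (d(xₙ, q) − d(Sₖ⋯S₁ xₙ, q)) = 0 and lim (d(Sₖ₋₁⋯S₁ xₙ, q) − d(Sₖ⋯S₁ xₙ, q)) = 0 (with the convention that the empty composition is the identity). -/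
open Filter Metric

variable {X : Type*} [MetricSpace X]

lemma compUpTo_dist_anti {X : Type*} [MetricSpace X] (m : ℕ) (S : ℕ → X → X)
    (hS : ∀ i < m, QuasiNonexpansive (S i))
    (q : X) (hq : ∀ i < m, q ∈ FixSet (S i)) (x : X) :
    ∀ j k, j ≤ k → k ≤ m →
      dist (compUpTo S k x) q ≤ dist (compUpTo S j x) q := by
  intro j k hjk hkm
  induction k with
  | zero => simp_all
  | succ k ih =>
    rcases Nat.lt_or_ge j (k + 1) with h | h
    · have hk : k < m := hkm
      calc dist (compUpTo S (k + 1) x) q ≤ dist (compUpTo S k x) q :=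
            (hS k hk).2 (compUpTo S k x) q (hq k hk)
        _ ≤ dist (compUpTo S j x) q := ih (Nat.lt_succ_iff.mp h) (le_of_lt hkm)
    · have : j = k + 1 := le_antisymm hjk h
      simp [this]

theorem stmt5 {X : Type*} [MetricSpace X] (m : ℕ) (S : ℕ → X → X)
    (hS : ∀ i < m, QuasiNonexpansive (S i))
    (q : X) (hq : ∀ i < m, q ∈ FixSet (S i))
    (x : ℕ → X) (hb : Bornology.IsBounded (Set.range x))
    (hlim : Tendsto (fun n => dist (x n) q - dist (compUpTo S m (x n)) q) atTop (nhds 0)) :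
    ∀ k, 1 ≤ k → k ≤ m →
      Tendsto (fun n => dist (x n) q - dist (compUpTo S k (x n)) q) atTop (nhds 0) ∧
      Tendsto (fun n => dist (compUpTo S (k - 1) (x n)) q - dist (compUpTo S k (x n)) q)
        atTop (nhds 0) := by
  intro k hk1 hkm
  have anti := compUpTo_dist_anti m S hS q hq
  have h1 : Tendsto (fun n => dist (x n) q - dist (compUpTo S k (x n)) q) atTop (nhds 0) := by
    apply tendsto_of_tendsto_of_tendsto_of_le_of_le tendsto_const_nhds hlim
    · intro n
      have := anti (x n) 0 k (Nat.zero_le k) hkm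
      simpa [compUpTo] using this
    · intro n
      have := anti (x n) k m hkm le_rfl
      simp only
      linarith
  refine ⟨h1, ?_⟩
  apply tendsto_of_tendsto_of_tendsto_of_le_of_le tendsto_const_nhds h1
  · intro n
    have := anti (x n) (k - 1) k (Nat.sub_le k 1) hkm
    simp only
    linarith
  · intro n
    have := anti (x n) 0 (k - 1) (Nat.zero_le _) (le_trans (Nat.sub_le k 1) hkm)
    simp only [compUpTo, id_eq] at this ⊢
    linarith
end

section
/- Let X be a metric space and S : X → X a strongly quasi-nonexpansive mapping with Fix(S) ≠ ∅. Then for every p ∈ X the Picard iterates xₙ := Sⁿ(p) satisfy lim_{n→∞} d(xₙ, S xₙ) = 0 (i.e., the iterates are asymptotically regular). -/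
open Filter Metric

variable {X : Type*} [MetricSpace X]

theorem stmt7 {X : Type*} [MetricSpace X] (S : X → X)
    (hS : StronglyQuasiNonexpansive S) (hfix : (FixSet S).Nonempty) (p : X) :
    Tendsto (fun n : ℕ => dist (S^[n] p) (S (S^[n] p))) atTop (nhds 0) := by
  obtain ⟨q, hq⟩ := hfix
  obtain ⟨⟨-, hqne⟩, hstrong⟩ := hS
  set x : ℕ → X := fun n => S^[n] p with hx
  have hstep : ∀ n, S (x n) = x (n + 1) := by
    intro n; simp [hx, Function.iterate_succ_apply']
  set a : ℕ → ℝ := fun n => dist (x n) q with ha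
  have hdec : ∀ n, a (n + 1) ≤ a n := by
    intro n
    have := hqne (x n) q hq
    simpa [ha, hstep n] using this
  have hanti : Antitone a := antitone_nat_of_succ_le hdec
  have hbdd : BddBelow (Set.range a) :=
    ⟨0, by rintro r ⟨n, rfl⟩; exact dist_nonneg⟩
  have hl : Tendsto a atTop (nhds (⨅ n, a n)) :=
    tendsto_atTop_ciInf hanti hbdd
  have hl' : Tendsto (fun n => a (n + 1)) atTop (nhds (⨅ n, a n)) :=
    hl.comp (tendsto_add_atTop_nat 1)
  have hdiff : Tendsto (fun n => dist (x n) q - dist (S (x n)) q) atTop (nhds 0) := by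
    have := hl.sub hl'
    simpa [ha, hstep] using this
  have hbound : Bornology.IsBounded (Set.range x) := by
    apply (Metric.isBounded_closedBall (x := q) (r := a 0)).subset
    rintro y ⟨n, rfl⟩
    exact Metric.mem_closedBall.2 (hanti (Nat.zero_le n))
  exact hstrong x hbound q hq hdiff
end

section
/- Let X be a complete CAT(0) (Hadamard) space and S : X → X a strongly quasi-nonexpansive, orbital Δ-demiclosed mapping with Fix(S) ≠ ∅. Then for any p₀ ∈ X the Picard iterates xₙ := Sⁿ(p₀) Δ-converge to some point p* ∈ Fix(S). -/
open Filter Metric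

variable {X : Type*} [MetricSpace X]

namespace SQN8
variable {X : Type*} [MetricSpace X]

/-- asymptotic radius function -/
noncomputable def A (u : ℕ → X) (y : X) : ℝ := limsup (fun n => dist y (u n)) atTop

lemma cobdd {f : ℕ → ℝ} (h0 : ∀ n, 0 ≤ f n) :
    IsCoboundedUnder (· ≤ ·) atTop f :=
  (isBoundedUnder_of_eventually_ge (Eventually.of_forall h0)).isCoboundedUnder_le

lemma bddlow {f : ℕ → ℝ} (h0 : ∀ n, 0 ≤ f n) :
    IsBoundedUnder (· ≥ ·) atTop f :=
  isBoundedUnder_of_eventually_ge (Eventually.of_forall h0)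

lemma bddA {u : ℕ → X} (hb : Bornology.IsBounded (Set.range u)) (y : X) :
    IsBoundedUnder (· ≤ ·) atTop (fun n => dist y (u n)) := by
  obtain ⟨C, hC⟩ := Metric.isBounded_range_iff.1 hb
  refine isBoundedUnder_of ⟨dist y (u 0) + C, fun n => ?_⟩
  have h1 := dist_triangle y (u 0) (u n)
  have h2 := hC 0 n
  linarith

lemma A_nonneg (u : ℕ → X) (hb : Bornology.IsBounded (Set.range u)) (y : X) : 0 ≤ A u y :=
  le_limsup_of_frequently_le (Frequently.of_forall fun _ => dist_nonneg) (bddA hb y)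

lemma A_le_add {u : ℕ → X} (hb : Bornology.IsBounded (Set.range u)) (y z : X) :
    A u y ≤ dist y z + A u z := by
  have h1 : limsup (fun n => dist y (u n)) atTop ≤
      limsup (fun n => dist y z + dist z (u n)) atTop := by
    refine limsup_le_limsup (Eventually.of_forall fun n => dist_triangle y z (u n))
      (cobdd fun n => dist_nonneg) ?_
    obtain ⟨B, hB⟩ := Metric.isBounded_range_iff.1 hb
    refine isBoundedUnder_of ⟨dist y z + (dist z (u 0) + B), fun n => ?_⟩
    have h1 := dist_triangle z (u 0) (u n)
    have h2 := hB 0 n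
    linarith
  have h2 := limsup_const_add atTop (fun n => dist z (u n)) (dist y z)
    (bddA hb z) (cobdd fun n => dist_nonneg)
  exact h1.trans_eq h2

lemma A_sq {u : ℕ → X} (hb : Bornology.IsBounded (Set.range u)) (y : X) :
    (A u y) ^ 2 = limsup (fun n => dist y (u n) ^ 2) atTop := by
  have hm : Monotone (fun t : ℝ => (max t 0) ^ 2) := fun a b h =>
    pow_le_pow_left₀ (le_max_right a 0) (max_le_max h le_rfl) 2
  have hc : ContinuousAt (fun t : ℝ => (max t 0) ^ 2) (A u y) :=
    ((continuous_id.max continuous_const).pow 2).continuousAt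
  have key := hm.map_limsup_of_continuousAt (F := atTop) (fun n => dist y (u n)) hc
    (bddA hb y) (cobdd fun n => dist_nonneg)
  have hAy : max (A u y) 0 = A u y := max_eq_left (A_nonneg u hb y)
  have : A u y ^ 2 = (max (limsup (fun n => dist y (u n)) atTop) 0) ^ 2 := by
    rw [show limsup (fun n => dist y (u n)) atTop = A u y from rfl, hAy]
  rw [this, key]
  congr 1
  funext n
  simp [Function.comp, max_eq_left (dist_nonneg : (0:ℝ) ≤ dist y (u n))]

lemma limsup_cn {a b c : ℕ → ℝ} (k : ℝ) (h : ∀ n, c n ≤ (a n + b n) / 2 - k)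
    (ha0 : ∀ n, 0 ≤ a n) (hb0 : ∀ n, 0 ≤ b n) (hc0 : ∀ n, 0 ≤ c n)
    (hA : IsBoundedUnder (· ≤ ·) atTop a) (hB : IsBoundedUnder (· ≤ ·) atTop b) :
    limsup c atTop ≤ (limsup a atTop + limsup b atTop) / 2 - k := by
  have cob : ∀ {f : ℕ → ℝ}, (∀ n, 0 ≤ f n) → IsCoboundedUnder (· ≤ ·) atTop f :=
    fun h0 => (isBoundedUnder_of_eventually_ge (Eventually.of_forall h0)).isCoboundedUnder_le
  have hsum : IsBoundedUnder (· ≤ ·) atTop (fun n => a n + b n) :=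
    isBoundedUnder_le_add hA hB
  have hsum0 : ∀ n, 0 ≤ a n + b n := fun n => add_nonneg (ha0 n) (hb0 n)
  have hhalf : IsBoundedUnder (· ≤ ·) atTop (fun n => (a n + b n) / 2) :=
    IsBoundedUnder.mono_le hsum (Eventually.of_forall fun n => by linarith [hsum0 n])
  have hhalf0 : ∀ n, 0 ≤ (a n + b n) / 2 := fun n => by linarith [hsum0 n]
  -- step 1
  have step1 : limsup c atTop ≤ limsup (fun n => (a n + b n) / 2 + -k) atTop := by
    refine limsup_le_limsup (Eventually.of_forall fun n => ?_) (cob hc0) ?_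
    · have := h n; linarith
    · refine IsBoundedUnder.mono_le (isBoundedUnder_le_add hhalf
        (isBoundedUnder_const (a := -k))) (Eventually.of_forall fun n => le_rfl)
  -- step 2
  have step2 : limsup (fun n => (a n + b n) / 2 + -k) atTop
      = limsup (fun n => (a n + b n) / 2) atTop + -k :=
    limsup_add_const atTop (fun n => (a n + b n) / 2) (-k) hhalf (cob hhalf0)
  -- step 3
  have hmdiv : Monotone (fun t : ℝ => t / 2) := fun s t hst => by linarith
  have step3 : limsup (fun n => a n + b n) atTop / 2
      = limsup (fun n => (a n + b n) / 2) atTop :=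
    hmdiv.map_limsup_of_continuousAt (F := atTop) (fun n => a n + b n)
      ((continuous_id.div_const 2).continuousAt) hsum (cob hsum0)
  -- step 4
  have step4 : limsup (fun n => a n + b n) atTop ≤ limsup a atTop + limsup b atTop :=
    limsup_add_le (isBoundedUnder_of_eventually_ge (Eventually.of_forall ha0)) hA
      (cob hb0) hB
  linarith


variable {u : ℕ → X}

lemma A_cn (hb : Bornology.IsBounded (Set.range u)) {y z m : X}
    (hcn : ∀ w, dist w m ^ 2 ≤ (dist w y ^ 2 + dist w z ^ 2) / 2 - dist y z ^ 2 / 4) :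
    (A u m) ^ 2 ≤ ((A u y) ^ 2 + (A u z) ^ 2) / 2 - dist y z ^ 2 / 4 := by
  rw [A_sq hb, A_sq hb, A_sq hb]
  refine limsup_cn (dist y z ^ 2 / 4) (fun n => ?_) (fun n => sq_nonneg _) (fun n => sq_nonneg _)
    (fun n => sq_nonneg _) ?_ ?_
  · have := hcn (u n)
    rw [dist_comm (u n) m, dist_comm (u n) y, dist_comm (u n) z] at this
    exact this
  · obtain ⟨B, hB⟩ := Metric.isBounded_range_iff.1 hb
    refine isBoundedUnder_of ⟨(dist y (u 0) + B) ^ 2, fun n => ?_⟩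
    have h1 := dist_triangle y (u 0) (u n)
    have h2 := hB 0 n
    have h3 : dist y (u n) ≤ dist y (u 0) + B := by linarith
    exact pow_le_pow_left₀ dist_nonneg h3 2
  · obtain ⟨B, hB⟩ := Metric.isBounded_range_iff.1 hb
    refine isBoundedUnder_of ⟨(dist z (u 0) + B) ^ 2, fun n => ?_⟩
    have h1 := dist_triangle z (u 0) (u n)
    have h2 := hB 0 n
    have h3 : dist z (u n) ≤ dist z (u 0) + B := by linarith
    exact pow_le_pow_left₀ dist_nonneg h3 2

/-- limsup along a strictly monotone subsequence is `≤` the limsup. -/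
lemma A_subseq (hb : Bornology.IsBounded (Set.range u)) {φ : ℕ → ℕ} (hφ : StrictMono φ)
    (y : X) : A (u ∘ φ) y ≤ A u y := by
  have hmap : map φ atTop ≤ (atTop : Filter ℕ) := hφ.tendsto_atTop
  have hne : (map φ atTop : Filter ℕ).NeBot := map_neBot
  have heq : A (u ∘ φ) y = limsup (fun n => dist y (u n)) (map φ atTop) := by
    rw [A, Filter.limsup, Filter.limsup, Filter.map_map]
    rfl
  rw [heq]
  refine limsup_le_limsup_of_le hmap ?_ (bddA hb y)
  exact (isBoundedUnder_of_eventually_ge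
    (Eventually.of_forall fun n => dist_nonneg)).isCoboundedUnder_le

/-- limsup only depends on tails. -/
lemma A_tail (k : ℕ) (y : X) : A (fun n => u (n + k)) y = A u y := by
  rw [A, A]
  exact limsup_nat_add (fun n => dist y (u n)) k

lemma bounded_comp (hb : Bornology.IsBounded (Set.range u)) (φ : ℕ → ℕ) :
    Bornology.IsBounded (Set.range (u ∘ φ)) :=
  hb.subset (Set.range_comp_subset_range φ u)


/-- Midpoint-with-CN property. -/
def HasCN (X : Type*) [MetricSpace X] : Prop :=
  ∀ x y : X, ∃ m : X, dist x m = dist x y / 2 ∧ dist y m = dist x y / 2 ∧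
    ∀ z : X, dist z m ^ 2 ≤ (dist z x ^ 2 + dist z y ^ 2) / 2 - dist x y ^ 2 / 4

lemma center_unique (hmid : HasCN X) (hb : Bornology.IsBounded (Set.range u))
    {c c' : X} (hc : ∀ y, A u c ≤ A u y) (hc' : ∀ y, A u c' ≤ A u y) : c = c' := by
  obtain ⟨m, -, -, hcn⟩ := hmid c c'
  have h1 : A u c ≤ A u m := hc m
  have e : A u c' = A u c := le_antisymm (hc' c) (hc c')
  have h2 := A_cn hb hcn
  have h3 : (A u c) ^ 2 ≤ (A u m) ^ 2 := pow_le_pow_left₀ (A_nonneg u hb c) h1 2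
  rw [e] at h2
  have h4 : dist c c' ^ 2 ≤ 0 := by nlinarith
  have h5 : dist c c' = 0 := by nlinarith [sq_nonneg (dist c c'), dist_nonneg (x := c) (y := c')]
  exact eq_of_dist_eq_zero h5

lemma center_exists (hcomp : CompleteSpace X) (hmid : HasCN X)
    (hb : Bornology.IsBounded (Set.range u)) : ∃ c, ∀ y, A u c ≤ A u y := by
  haveI := hcomp
  haveI : Nonempty X := ⟨u 0⟩
  set r := ⨅ y, A u y with hr
  have hbdd : BddBelow (Set.range fun y => A u y) := ⟨0, by rintro _ ⟨y, rfl⟩; exact A_nonneg u hb y⟩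
  have hr_le : ∀ y, r ≤ A u y := fun y => ciInf_le hbdd y
  have hr0 : 0 ≤ r := le_ciInf fun y => A_nonneg u hb y
  have hex : ∀ k : ℕ, ∃ y, A u y < r + 1 / (k + 1) := by
    intro k
    refine exists_lt_of_ciInf_lt ?_
    have : (0:ℝ) < 1 / (k + 1) := by positivity
    linarith
  choose yk hyk using hex
  have hdist : ∀ k l : ℕ, dist (yk k) (yk l) ^ 2 ≤
      4 * r * (1 / (k + 1)) + 2 * (1 / (k + 1 : ℝ)) ^ 2
        + 4 * r * (1 / (l + 1)) + 2 * (1 / (l + 1 : ℝ)) ^ 2 := by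
    intro k l
    obtain ⟨m, -, -, hcn⟩ := hmid (yk k) (yk l)
    have h2 := A_cn hb hcn
    have h3 : r ^ 2 ≤ (A u m) ^ 2 := pow_le_pow_left₀ hr0 (hr_le m) 2
    have hk : (A u (yk k)) ^ 2 ≤ (r + 1 / (k + 1)) ^ 2 :=
      pow_le_pow_left₀ (A_nonneg u hb _) (hyk k).le 2
    have hl : (A u (yk l)) ^ 2 ≤ (r + 1 / (l + 1)) ^ 2 :=
      pow_le_pow_left₀ (A_nonneg u hb _) (hyk l).le 2
    nlinarith
  set b : ℕ → ℝ := fun N => Real.sqrt (8 * r * (1 / (N + 1)) + 4 * (1 / (N + 1 : ℝ)) ^ 2) with hbdef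
  have hbound : ∀ n m N : ℕ, N ≤ n → N ≤ m → dist (yk n) (yk m) ≤ b N := by
    intro n m N hn hm
    have hδn : (1 : ℝ) / (n + 1) ≤ 1 / (N + 1) := by
      apply one_div_le_one_div_of_le (by positivity)
      exact_mod_cast Nat.succ_le_succ hn
    have hδm : (1 : ℝ) / (m + 1) ≤ 1 / (N + 1) := by
      apply one_div_le_one_div_of_le (by positivity)
      exact_mod_cast Nat.succ_le_succ hm
    have hδn0 : (0:ℝ) < 1 / (n + 1) := by positivity
    have hδm0 : (0:ℝ) < 1 / (m + 1) := by positivity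
    have h1 := hdist n m
    have h2 : dist (yk n) (yk m) ^ 2 ≤ 8 * r * (1 / (N + 1)) + 4 * (1 / (N + 1 : ℝ)) ^ 2 := by
      nlinarith
    rw [hbdef]
    rw [show dist (yk n) (yk m) = Real.sqrt (dist (yk n) (yk m) ^ 2) from
      (Real.sqrt_sq dist_nonneg).symm]
    exact Real.sqrt_le_sqrt h2
  have hb0 : Tendsto b atTop (nhds 0) := by
    have h1 : Tendsto (fun N : ℕ => (1 : ℝ) / (N + 1)) atTop (nhds 0) :=
      tendsto_one_div_add_atTop_nhds_zero_nat
    have h2 : Tendsto (fun N : ℕ => 8 * r * (1 / (N + 1)) + 4 * (1 / (N + 1 : ℝ)) ^ 2)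
        atTop (nhds (8 * r * 0 + 4 * 0 ^ 2)) := by
      exact ((h1.const_mul (8 * r)).add ((h1.pow 2).const_mul 4))
    rw [show (8 : ℝ) * r * 0 + 4 * 0 ^ 2 = 0 by ring] at h2
    have := (Real.continuous_sqrt.tendsto' 0 0 Real.sqrt_zero).comp h2
    exact this
  have hcauchy : CauchySeq yk := cauchySeq_of_le_tendsto_0 b hbound hb0
  obtain ⟨c, hc⟩ := cauchySeq_tendsto_of_complete hcauchy
  have hAc : ∀ k, A u c ≤ dist c (yk k) + (r + 1 / (k + 1)) := fun k =>
    (A_le_add hb c (yk k)).trans (by linarith [hyk k])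
  have hlim : Tendsto (fun k : ℕ => dist c (yk k) + (r + 1 / (k + 1))) atTop
      (nhds (0 + (r + 0))) := by
    have hd : Tendsto (fun k => dist c (yk k)) atTop (nhds (dist c c)) :=
      tendsto_const_nhds.dist hc
    rw [dist_self] at hd
    exact hd.add (tendsto_const_nhds.add tendsto_one_div_add_atTop_nhds_zero_nat)
  have : A u c ≤ 0 + (r + 0) := ge_of_tendsto hlim (Eventually.of_forall hAc)
  exact ⟨c, fun y => by linarith [hr_le y]⟩


/-- asymptotic radius -/
noncomputable def rad (u : ℕ → X) : ℝ := sInf (Set.range fun y => A u y)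

lemma rad_bddBelow (hb : Bornology.IsBounded (Set.range u)) :
    BddBelow (Set.range fun y => A u y) :=
  ⟨0, by rintro _ ⟨y, rfl⟩; exact A_nonneg u hb y⟩

lemma rad_le (hb : Bornology.IsBounded (Set.range u)) (y : X) : rad u ≤ A u y :=
  csInf_le (rad_bddBelow hb) ⟨y, rfl⟩

lemma le_rad {a : ℝ} (h : ∀ y, a ≤ A u y) (y0 : X) : a ≤ rad u := by
  haveI : Nonempty X := ⟨y0⟩
  exact le_csInf (Set.range_nonempty _) (by rintro _ ⟨y, rfl⟩; exact h y)

lemma rad_nonneg (hb : Bornology.IsBounded (Set.range u)) : 0 ≤ rad u :=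
  le_rad (fun y => A_nonneg u hb y) (u 0)

lemma rad_subseq (hb : Bornology.IsBounded (Set.range u)) {φ : ℕ → ℕ}
    (hφ : StrictMono φ) : rad (u ∘ φ) ≤ rad u :=
  le_rad (fun y => (rad_le (bounded_comp hb φ) y).trans (A_subseq hb hφ y)) (u 0)

/-- the set of radii of subsequences -/
def radSet (u : ℕ → X) : Set ℝ := {r : ℝ | ∃ σ : ℕ → ℕ, StrictMono σ ∧ r = rad (u ∘ σ)}

lemma radSet_nonempty (u : ℕ → X) : (radSet u).Nonempty :=
  ⟨rad u, id, strictMono_id, by rw [Function.comp_id]⟩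

lemma radSet_bddBelow (hb : Bornology.IsBounded (Set.range u)) : BddBelow (radSet u) :=
  ⟨0, by rintro r ⟨σ, hσ, rfl⟩; exact rad_nonneg (bounded_comp hb σ)⟩

noncomputable def subRad (u : ℕ → X) : ℝ := sInf (radSet u)

lemma subRad_le (hb : Bornology.IsBounded (Set.range u)) {σ : ℕ → ℕ}
    (hσ : StrictMono σ) : subRad u ≤ rad (u ∘ σ) :=
  csInf_le (radSet_bddBelow hb) ⟨σ, hσ, rfl⟩

lemma subRad_mono (hb : Bornology.IsBounded (Set.range u)) {ψ τ : ℕ → ℕ}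
    (hψ : StrictMono ψ) (hτ : StrictMono τ) :
    subRad (u ∘ ψ) ≤ subRad (u ∘ (ψ ∘ τ)) := by
  refine le_csInf (radSet_nonempty _) ?_
  rintro r ⟨σ, hσ, rfl⟩
  exact csInf_le (radSet_bddBelow (bounded_comp hb ψ)) ⟨τ ∘ σ, hτ.comp hσ, rfl⟩

lemma rad_tail (v : ℕ → X) (k : ℕ) : rad (fun j => v (k + j)) = rad v := by
  have h : (fun y : X => A (fun j => v (k + j)) y) = fun y => A v y := by
    funext y
    have h2 : (fun j => v (k + j)) = fun j => v (j + k) := by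
      funext j; rw [Nat.add_comm]
    rw [h2]
    exact A_tail (u := v) k y
  unfold rad
  rw [h]

/-- Δ-compactness: every bounded sequence has a subsequence `u ∘ d` and a point `c`
which is an asymptotic center of every subsequence of `u ∘ d`. -/
lemma delta_compact (hcomp : CompleteSpace X) (hmid : HasCN X)
    (hb : Bornology.IsBounded (Set.range u)) :
    ∃ d : ℕ → ℕ, StrictMono d ∧ ∃ c : X,
      ∀ π : ℕ → ℕ, StrictMono π → ∀ y, A (u ∘ d ∘ π) c ≤ A (u ∘ d ∘ π) y := by
  classical
  -- refinement step
  have step : ∀ (p : {σ : ℕ → ℕ // StrictMono σ}) (k : ℕ), ∃ τ : ℕ → ℕ, StrictMono τ ∧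
      rad (u ∘ (p.1 ∘ τ)) < subRad (u ∘ p.1) + 1 / (k + 1) := by
    intro p k
    have hε : (0:ℝ) < 1 / (k + 1) := by positivity
    obtain ⟨a, ⟨σ, hσ, rfl⟩, ha⟩ := Real.lt_sInf_add_pos (radSet_nonempty (u ∘ p.1)) hε
    exact ⟨σ, hσ, ha⟩
  choose T hT1 hT2 using step
  -- nested subsequences
  let g : ℕ → {σ : ℕ → ℕ // StrictMono σ} := fun k =>
    Nat.rec ⟨id, strictMono_id⟩ (fun k ih => ⟨ih.1 ∘ T ih k, ih.2.comp (hT1 ih k)⟩) k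
  have hg0 : (g 0).1 = id := rfl
  have hgs : ∀ k, (g (k + 1)).1 = (g k).1 ∘ T (g k) k := fun k => rfl
  set ρ : ℕ → ℝ := fun k => subRad (u ∘ (g k).1) with hρ
  have hrad : ∀ k, rad (u ∘ (g (k + 1)).1) < ρ k + 1 / (k + 1) := fun k => hT2 (g k) k
  have hρmono : Monotone ρ := monotone_nat_of_le_succ fun k => by
    have := subRad_mono hb (g k).2 (hT1 (g k) k)
    simpa [hρ, hgs k] using this
  -- diagonal sequence
  set d : ℕ → ℕ := fun n => (g n).1 n with hd
  have hdmono : StrictMono d := by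
    apply strictMono_nat_of_lt_succ
    intro n
    have h1 : (n + 1 : ℕ) ≤ T (g n) n (n + 1) := (hT1 (g n) n).le_apply
    calc d n = (g n).1 n := rfl
    _ < (g n).1 (n + 1) := (g n).2 (Nat.lt_succ_self n)
    _ ≤ (g n).1 (T (g n) n (n + 1)) := (g n).2.monotone h1
    _ = d (n + 1) := rfl
  -- compositions from level k
  let e : ℕ → ℕ → (ℕ → ℕ) := fun k j =>
    Nat.rec id (fun j ih => ih ∘ T (g (k + j)) (k + j)) j
  have he0 : ∀ k, e k 0 = id := fun k => rfl
  have hes : ∀ k j, e k (j + 1) = e k j ∘ T (g (k + j)) (k + j) := fun k j => rfl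
  have hemono : ∀ k j, StrictMono (e k j) := by
    intro k j
    induction j with
    | zero => exact strictMono_id
    | succ j ih => exact ih.comp (hT1 _ _)
  have hcompo : ∀ k j, (g (k + j)).1 = (g k).1 ∘ e k j := by
    intro k j
    induction j with
    | zero => rfl
    | succ j ih =>
      show (g ((k + j) + 1)).1 = (g k).1 ∘ e k (j + 1)
      rw [hgs (k + j), ih]; rfl
  -- the map D for level k
  have hD : ∀ k, ∀ m, k ≤ m → d m = (g k).1 (e k (m - k) m) := by
    intro k m hkm
    have h1 : k + (m - k) = m := Nat.add_sub_cancel' hkm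
    have := hcompo k (m - k)
    rw [h1] at this
    rw [hd]
    simp only [this, Function.comp]
  set D : ℕ → ℕ → ℕ := fun k m => e k (m - k) m with hDdef
  have hDstep : ∀ k m, k ≤ m → D k m < D k (m + 1) := by
    intro k m hkm
    have h1 : m + 1 - k = (m - k) + 1 := by omega
    have h2 : k + (m - k) = m := Nat.add_sub_cancel' hkm
    calc D k m = e k (m - k) m := rfl
    _ < e k (m - k) (m + 1) := hemono k (m - k) (Nat.lt_succ_self m)
    _ ≤ e k (m - k) (T (g m) m (m + 1)) := (hemono k (m - k)).monotone (hT1 (g m) m).le_apply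
    _ = D k (m + 1) := by
        rw [hDdef]; simp only [h1, hes]
        rw [show k + (m - k) = m from h2]
        rfl
  have hDlt : ∀ k m m', k ≤ m → m < m' → D k m < D k m' := by
    intro k m m' hkm hmm
    induction m' with
    | zero => omega
    | succ m' ih =>
      rcases Nat.lt_succ_iff_lt_or_eq.1 hmm with h | h
      · exact (ih h).trans_le (hDstep k m' (by omega)).le
      · subst h; exact hDstep k m hkm
  -- tails of subsequences of `u ∘ d` are subsequences of `u ∘ g k`
  have htail : ∀ (π : ℕ → ℕ), StrictMono π → ∀ k, ∃ τ : ℕ → ℕ, StrictMono τ ∧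
      ∀ j, (u ∘ d ∘ π) (k + j) = ((u ∘ (g k).1) ∘ τ) j := by
    intro π hπ k
    refine ⟨fun j => D k (π (k + j)), ?_, ?_⟩
    · intro j j' hjj
      exact hDlt k _ _ ((Nat.le_add_right k j).trans hπ.le_apply)
        (hπ (by omega))
    · intro j
      have hk : k ≤ π (k + j) := (Nat.le_add_right k j).trans hπ.le_apply
      simp only [Function.comp]
      rw [hD k (π (k + j)) hk]
  -- the diagonal sequence
  set w : ℕ → X := u ∘ d with hw
  have hbw : Bornology.IsBounded (Set.range w) := bounded_comp hb d
  have hlow : ∀ (π : ℕ → ℕ), StrictMono π → ∀ k, ρ k ≤ rad (w ∘ π) := by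
    intro π hπ k
    obtain ⟨τ, hτ, hτeq⟩ := htail π hπ k
    have heq : (fun j => (w ∘ π) (k + j)) = (u ∘ (g k).1) ∘ τ := funext fun j => hτeq j
    have h1 : subRad (u ∘ (g k).1) ≤ rad ((u ∘ (g k).1) ∘ τ) :=
      subRad_le (bounded_comp hb _) hτ
    have h2 : rad ((u ∘ (g k).1) ∘ τ) = rad (w ∘ π) := by
      rw [← heq, rad_tail (w ∘ π) k]
    rw [← h2]
    exact h1
  have hup : ∀ k : ℕ, rad w ≤ ρ k + 1 / (k + 1) := by
    intro k
    obtain ⟨τ, hτ, hτeq⟩ := htail id strictMono_id (k + 1)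
    have heq : (fun j => w ((k + 1) + j)) = (u ∘ (g (k + 1)).1) ∘ τ :=
      funext fun j => hτeq j
    have h1 : rad w = rad ((u ∘ (g (k + 1)).1) ∘ τ) := by
      rw [← heq, rad_tail w (k + 1)]
    have h2 : rad ((u ∘ (g (k + 1)).1) ∘ τ) ≤ rad (u ∘ (g (k + 1)).1) :=
      rad_subseq (bounded_comp hb _) hτ
    have h3 := hrad k
    linarith
  have hradeq : ∀ (π : ℕ → ℕ), StrictMono π → rad (w ∘ π) = rad w := by
    intro π hπ
    refine le_antisymm (rad_subseq hbw hπ) ?_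
    have h : ∀ k : ℕ, rad w ≤ rad (w ∘ π) + 1 / (k + 1) := fun k =>
      (hup k).trans (by linarith [hlow π hπ k])
    have hlim : Tendsto (fun k : ℕ => rad (w ∘ π) + 1 / (k + 1)) atTop
        (nhds (rad (w ∘ π) + 0)) :=
      tendsto_const_nhds.add tendsto_one_div_add_atTop_nhds_zero_nat
    have := ge_of_tendsto hlim (Eventually.of_forall h)
    linarith
  obtain ⟨c, hc⟩ := center_exists hcomp hmid hbw
  refine ⟨d, hdmono, c, fun π hπ y => ?_⟩
  have h1 : A (w ∘ π) c ≤ A w c := A_subseq hbw hπ c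
  have h2 : A w c = rad w := le_antisymm (le_rad (fun y' => hc y') (u 0)) (rad_le hbw c)
  have h3 : rad (w ∘ π) ≤ A (w ∘ π) y := rad_le (bounded_comp hbw π) y
  have h4 := hradeq π hπ
  show A (w ∘ π) c ≤ A (w ∘ π) y
  linarith

end SQN8

open SQN8 in
theorem stmt8 {X : Type*} [MetricSpace X] (hX : IsHadamard X) (S : X → X)
    (hS : StronglyQuasiNonexpansive S) (hd : OrbitalDeltaDemiclosed S)
    (hfix : (FixSet S).Nonempty) (p₀ : X) :
    ∃ p : X, p ∈ FixSet S ∧ DeltaConv (fun n : ℕ => S^[n] p₀) p := by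
  obtain ⟨hcomp, hmid'⟩ := hX
  have hmid : HasCN X := hmid'
  set x : ℕ → X := fun n => S^[n] p₀ with hx
  obtain ⟨q, hq⟩ := hfix
  have hqn := hS.1.2
  have hsucc : ∀ n, x (n + 1) = S (x n) := fun n => Function.iterate_succ_apply' S n p₀
  have hanti : ∀ p ∈ FixSet S, Antitone fun n => dist (x n) p := by
    intro p hp
    apply antitone_nat_of_succ_le
    intro n
    calc dist (x (n + 1)) p = dist (S (x n)) p := by rw [hsucc n]
      _ ≤ dist (x n) p := hqn (x n) p hp
  have hbx : Bornology.IsBounded (Set.range x) := by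
    rw [Metric.isBounded_range_iff]
    refine ⟨2 * dist (x 0) q, fun m n => ?_⟩
    have h1 : dist (x m) q ≤ dist (x 0) q := hanti q hq (Nat.zero_le m)
    have h2 : dist (x n) q ≤ dist (x 0) q := hanti q hq (Nat.zero_le n)
    calc dist (x m) (x n) ≤ dist (x m) q + dist q (x n) := dist_triangle _ _ _
      _ = dist (x m) q + dist (x n) q := by rw [dist_comm q (x n)]
      _ ≤ 2 * dist (x 0) q := by linarith
  have hlim : ∀ p ∈ FixSet S, ∃ L, Tendsto (fun n => dist (x n) p) atTop (nhds L) := by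
    intro p hp
    exact ⟨_, tendsto_atTop_ciInf (hanti p hp) ⟨0, by rintro _ ⟨n, rfl⟩; exact dist_nonneg⟩⟩
  -- asymptotic regularity
  have hdiff : Tendsto (fun n => dist (x n) q - dist (S (x n)) q) atTop (nhds 0) := by
    obtain ⟨L, hL⟩ := hlim q hq
    have hL' : Tendsto (fun n => dist (x (n + 1)) q) atTop (nhds L) :=
      hL.comp (tendsto_add_atTop_nat 1)
    have heq : (fun n => dist (S (x n)) q) = fun n => dist (x (n + 1)) q :=
      funext fun n => by rw [hsucc n]
    have := hL.sub (heq ▸ hL')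
    simpa using this
  have hreg : Tendsto (fun n => dist (x n) (S (x n))) atTop (nhds 0) := hS.2 x hbx q hq hdiff
  -- helper: limsup of a convergent distance sequence
  have A_of_tendsto : ∀ {v : ℕ → X} {p : X} {L : ℝ},
      Tendsto (fun n => dist (v n) p) atTop (nhds L) → A v p = L := by
    intro v p L h
    refine Tendsto.limsup_eq ?_
    refine h.congr fun n => dist_comm (v n) p
  -- Key: any asymptotic center of any subsequence is a fixed point
  have key1 : ∀ (φ : ℕ → ℕ), StrictMono φ → ∀ c : X,
      (∀ y, A (x ∘ φ) c ≤ A (x ∘ φ) y) → c ∈ FixSet S := by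
    intro φ hφ c hc
    obtain ⟨ψ, hψ, z, hz⟩ := delta_compact hcomp hmid (bounded_comp hbx φ)
    have hbφψ : Bornology.IsBounded (Set.range ((x ∘ φ) ∘ ψ)) :=
      bounded_comp (bounded_comp hbx φ) ψ
    have hdc : DeltaConv ((x ∘ φ) ∘ ψ) z := by
      refine ⟨hbφψ, fun π hπ y => hz π hπ y⟩
    have horb : ∃ (x0 : X) (θ : ℕ → ℕ), StrictMono θ ∧ ∀ n, ((x ∘ φ) ∘ ψ) n = S^[θ n] x0 :=
      ⟨p₀, φ ∘ ψ, hφ.comp hψ, fun n => rfl⟩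
    have hzreg : Tendsto (fun n => dist (((x ∘ φ) ∘ ψ) n) (S (((x ∘ φ) ∘ ψ) n)))
        atTop (nhds 0) := hreg.comp ((hφ.comp hψ).tendsto_atTop)
    have hzfix : z ∈ FixSet S := hd ((x ∘ φ) ∘ ψ) z horb hdc hzreg
    obtain ⟨Lz, hLz⟩ := hlim z hzfix
    have e1 : A ((x ∘ φ) ∘ ψ) z = Lz := A_of_tendsto (hLz.comp ((hφ.comp hψ).tendsto_atTop))
    have e2 : A (x ∘ φ) z = Lz := A_of_tendsto (hLz.comp hφ.tendsto_atTop)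
    have hzmin : ∀ y, A ((x ∘ φ) ∘ ψ) z ≤ A ((x ∘ φ) ∘ ψ) y := fun y => hz id strictMono_id y
    have hcmin : ∀ y, A ((x ∘ φ) ∘ ψ) c ≤ A ((x ∘ φ) ∘ ψ) y := by
      intro y
      have h3 : A ((x ∘ φ) ∘ ψ) c ≤ A (x ∘ φ) c := A_subseq (bounded_comp hbx φ) hψ c
      have h4 : A (x ∘ φ) c ≤ A (x ∘ φ) z := hc z
      have h5 := hzmin y
      rw [e2] at h4
      rw [e1] at h5
      linarith
    have hcz : c = z := center_unique hmid hbφψ hcmin hzmin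
    rw [hcz]
    exact hzfix
  -- the asymptotic center of the full orbit
  obtain ⟨p, hp⟩ := center_exists hcomp hmid hbx
  have hpfix : p ∈ FixSet S := key1 id strictMono_id p (fun y => hp y)
  obtain ⟨Lp, hLp⟩ := hlim p hpfix
  refine ⟨p, hpfix, hbx, fun φ hφ => ?_⟩
  intro y
  obtain ⟨c, hc⟩ := center_exists hcomp hmid (bounded_comp hbx φ)
  have hcfix : c ∈ FixSet S := key1 φ hφ c hc
  obtain ⟨Lc, hLc⟩ := hlim c hcfix
  have e1 : A (x ∘ φ) p = Lp := A_of_tendsto (hLp.comp hφ.tendsto_atTop)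
  have e2 : A (x ∘ φ) c = Lc := A_of_tendsto (hLc.comp hφ.tendsto_atTop)
  have e3 : A x p = Lp := A_of_tendsto hLp
  have e4 : A x c = Lc := A_of_tendsto hLc
  have h5 : Lp ≤ Lc := by rw [← e3, ← e4]; exact hp c
  have h6 : A (x ∘ φ) c ≤ A (x ∘ φ) y := hc y
  show A (x ∘ φ) p ≤ A (x ∘ φ) y
  rw [e1]
  rw [e2] at h6
  linarith
end

section
/- Let X be a complete CAT(0) space and S₁, S₂ : X → X strongly quasi-nonexpansive Δ-demiclosed mappings with Fix(S₁) ∩ Fix(S₂) ≠ ∅. Then S₂ ∘ S₁ is a strongly quasi-nonexpansive orbital Δ-demiclosed mapping. -/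
open Filter Metric

variable {X : Type*} [MetricSpace X]

lemma bdd_dist' {x : ℕ → X} (hb : Bornology.IsBounded (Set.range x)) (v : X) :
    ∃ C, ∀ n, dist v (x n) ≤ C := by
  obtain ⟨r, hr⟩ := (Metric.isBounded_iff_subset_closedBall v).1 hb
  exact ⟨r, fun n => by simpa [Metric.mem_closedBall, dist_comm] using hr (Set.mem_range_self n)⟩

lemma bdd_of_dist_le' {x : ℕ → X} (v : X) {C : ℝ} (h : ∀ n, dist v (x n) ≤ C) :
    Bornology.IsBounded (Set.range x) := by
  refine (Metric.isBounded_iff_subset_closedBall v).2 ⟨C, ?_⟩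
  rintro _ ⟨n, rfl⟩
  simpa [Metric.mem_closedBall, dist_comm] using h n

lemma limsup_dist_le' {x y : ℕ → X} (hx : Bornology.IsBounded (Set.range x))
    (h : Tendsto (fun n => dist (x n) (y n)) atTop (nhds 0)) (v : X) :
    limsup (fun n => dist v (y n)) atTop ≤ limsup (fun n => dist v (x n)) atTop := by
  obtain ⟨C, hC⟩ := bdd_dist' hx v
  refine le_of_forall_pos_le_add fun ε hε => ?_
  have hev : ∀ᶠ n in atTop, dist v (y n) ≤ dist v (x n) + ε := by
    filter_upwards [h.eventually_lt_const hε] with n hn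
    calc dist v (y n) ≤ dist v (x n) + dist (x n) (y n) := dist_triangle _ _ _
    _ ≤ dist v (x n) + ε := by linarith
  have hb : IsBoundedUnder (· ≤ ·) atTop (fun n => dist v (x n) + ε) :=
    isBoundedUnder_of ⟨C + ε, fun n => by have := hC n; simp; linarith⟩
  have hcb : IsCoboundedUnder (· ≤ ·) atTop (fun n => dist v (y n)) :=
    isCoboundedUnder_le_of_le atTop (fun n => dist_nonneg)
  calc limsup (fun n => dist v (y n)) atTop
      ≤ limsup (fun n => dist v (x n) + ε) atTop := limsup_le_limsup hev hcb hb
    _ = limsup (fun n => dist v (x n)) atTop + ε := by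
        exact limsup_add_const atTop _ ε (isBoundedUnder_of ⟨C, hC⟩)
          (isCoboundedUnder_le_of_le atTop (fun n => dist_nonneg))

lemma deltaConv_of_close' {x y : ℕ → X} {z : X} (hx : DeltaConv x z)
    (hy : Bornology.IsBounded (Set.range y))
    (h : Tendsto (fun n => dist (x n) (y n)) atTop (nhds 0)) : DeltaConv y z := by
  refine ⟨hy, fun φ hφ v => ?_⟩
  have hxφ : Bornology.IsBounded (Set.range (x ∘ φ)) :=
    hx.1.subset (Set.range_comp_subset_range φ x)
  have hyφ : Bornology.IsBounded (Set.range (y ∘ φ)) :=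
    hy.subset (Set.range_comp_subset_range φ y)
  have hsub : Tendsto (fun n => dist (x (φ n)) (y (φ n))) atTop (nhds 0) :=
    h.comp hφ.tendsto_atTop
  have hsub' : Tendsto (fun n => dist (y (φ n)) (x (φ n))) atTop (nhds 0) := by
    simpa [dist_comm] using hsub
  have key : ∀ w : X, limsup (fun n => dist w (y (φ n))) atTop
      = limsup (fun n => dist w (x (φ n))) atTop := fun w =>
    le_antisymm (limsup_dist_le' hxφ hsub w) (limsup_dist_le' hyφ hsub' w)
  calc limsup (fun n => dist z ((y ∘ φ) n)) atTop
      = limsup (fun n => dist z ((x ∘ φ) n)) atTop := key z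
    _ ≤ limsup (fun n => dist v ((x ∘ φ) n)) atTop := hx.2 φ hφ v
    _ = limsup (fun n => dist v ((y ∘ φ) n)) atTop := (key v).symm

lemma sqn_fix_of_eq' {S : X → X} (h : StronglyQuasiNonexpansive S) {p q : X}
    (hq : q ∈ FixSet S) (he : dist (S p) q = dist p q) : p ∈ FixSet S := by
  have := h.2 (fun _ => p) (bdd_of_dist_le' p (C := dist p p) (fun _ => le_rfl)) q hq
    (by simpa [he] using (tendsto_const_nhds : Tendsto (fun _ : ℕ => (0:ℝ)) atTop (nhds 0)))
  have h0 : dist p (S p) = 0 := tendsto_nhds_unique tendsto_const_nhds this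
  exact (dist_eq_zero.1 (by simpa [dist_comm] using h0))

lemma stmt10_aux {X : Type*} [MetricSpace X] (S₁ S₂ : X → X)
    (h₁ : StronglyQuasiNonexpansive S₁) (h₂ : StronglyQuasiNonexpansive S₂)
    (hd₁ : DeltaDemiclosed S₁) (hd₂ : DeltaDemiclosed S₂)
    (hInt : (FixSet S₁ ∩ FixSet S₂).Nonempty) :
    StronglyQuasiNonexpansive (S₂ ∘ S₁) ∧ DeltaDemiclosed (S₂ ∘ S₁) := by
  obtain ⟨q, hq1, hq2⟩ := hInt
  -- Fix set characterization
  have hfix : FixSet (S₂ ∘ S₁) = FixSet S₁ ∩ FixSet S₂ := by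
    ext p
    constructor
    · intro hp
      have hp' : S₂ (S₁ p) = p := hp
      have e1 : dist (S₁ p) q ≤ dist p q := h₁.1.2 p q hq1
      have e2 : dist (S₂ (S₁ p)) q ≤ dist (S₁ p) q := h₂.1.2 (S₁ p) q hq2
      rw [hp'] at e2
      have he1 : dist (S₁ p) q = dist p q := le_antisymm e1 e2
      have hp1 : p ∈ FixSet S₁ := sqn_fix_of_eq' h₁ hq1 he1
      have hp2 : S₁ p = p := hp1
      refine ⟨hp1, ?_⟩
      show S₂ p = p
      rwa [hp2] at hp'
    · rintro ⟨hp1, hp2⟩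
      show S₂ (S₁ p) = p
      rw [show S₁ p = p from hp1]; exact hp2
  have hqc : q ∈ FixSet (S₂ ∘ S₁) := hfix ▸ ⟨hq1, hq2⟩
  have hqne : QuasiNonexpansive (S₂ ∘ S₁) := by
    refine ⟨⟨q, hqc⟩, fun x p hp => ?_⟩
    rw [hfix] at hp
    exact le_trans (h₂.1.2 (S₁ x) p hp.2) (h₁.1.2 x p hp.1)
  -- gap splitting
  have gap : ∀ (x : ℕ → X), Bornology.IsBounded (Set.range x) →
      ∀ p ∈ FixSet (S₂ ∘ S₁),
      Tendsto (fun n => dist (x n) p - dist (S₂ (S₁ (x n))) p) atTop (nhds 0) →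
      Tendsto (fun n => dist (x n) (S₂ (S₁ (x n)))) atTop (nhds 0) := by
    intro x hb p hp ht
    rw [hfix] at hp
    obtain ⟨hp1, hp2⟩ := hp
    set a : ℕ → ℝ := fun n => dist (x n) p - dist (S₁ (x n)) p with ha
    set b : ℕ → ℝ := fun n => dist (S₁ (x n)) p - dist (S₂ (S₁ (x n))) p with hbdef
    have hanneg : ∀ n, 0 ≤ a n := fun n => sub_nonneg.2 (h₁.1.2 (x n) p hp1)
    have hbnneg : ∀ n, 0 ≤ b n := fun n => sub_nonneg.2 (h₂.1.2 (S₁ (x n)) p hp2)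
    have hsum : (fun n => a n + b n) = fun n => dist (x n) p - dist (S₂ (S₁ (x n))) p := by
      funext n; simp only [ha, hbdef]; ring
    have hta : Tendsto a atTop (nhds 0) :=
      squeeze_zero hanneg (fun n => le_add_of_nonneg_right (hbnneg n)) (hsum ▸ ht)
    have htb : Tendsto b atTop (nhds 0) :=
      squeeze_zero hbnneg (fun n => le_add_of_nonneg_left (hanneg n)) (hsum ▸ ht)
    have hd1 : Tendsto (fun n => dist (x n) (S₁ (x n))) atTop (nhds 0) := h₁.2 x hb p hp1 hta
    obtain ⟨C, hC⟩ := bdd_dist' hb p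
    have hbS : Bornology.IsBounded (Set.range fun n => S₁ (x n)) :=
      bdd_of_dist_le' p (C := C) (fun n => by
        have := h₁.1.2 (x n) p hp1
        calc dist p (S₁ (x n)) = dist (S₁ (x n)) p := dist_comm _ _
        _ ≤ dist (x n) p := this
        _ = dist p (x n) := dist_comm _ _
        _ ≤ C := hC n)
    have hd2 : Tendsto (fun n => dist (S₁ (x n)) (S₂ (S₁ (x n)))) atTop (nhds 0) :=
      h₂.2 (fun n => S₁ (x n)) hbS p hp2 htb
    refine squeeze_zero (fun n => dist_nonneg)
      (fun n => dist_triangle (x n) (S₁ (x n)) (S₂ (S₁ (x n)))) ?_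
    simpa using hd1.add hd2
  refine ⟨⟨hqne, gap⟩, ?_⟩
  -- Delta demiclosed
  intro x z hx ht
  have hb := hx.1
  have ht' : Tendsto (fun n => dist (x n) (S₂ (S₁ (x n)))) atTop (nhds 0) := by
    simpa [Function.comp] using ht
  have hgap0 : Tendsto (fun n => dist (x n) q - dist (S₂ (S₁ (x n))) q) atTop (nhds 0) := by
    refine squeeze_zero (fun n => sub_nonneg.2 (hqne.2 (x n) q hqc)) (fun n => ?_) ht'
    have := dist_triangle (x n) (S₂ (S₁ (x n))) q
    linarith
  -- reuse the splitting from `gap`'s proof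
  have hp1 := hq1; have hp2 := hq2
  set a : ℕ → ℝ := fun n => dist (x n) q - dist (S₁ (x n)) q with ha
  set b : ℕ → ℝ := fun n => dist (S₁ (x n)) q - dist (S₂ (S₁ (x n))) q with hbdef
  have hanneg : ∀ n, 0 ≤ a n := fun n => sub_nonneg.2 (h₁.1.2 (x n) q hp1)
  have hbnneg : ∀ n, 0 ≤ b n := fun n => sub_nonneg.2 (h₂.1.2 (S₁ (x n)) q hp2)
  have hsum : (fun n => a n + b n) = fun n => dist (x n) q - dist (S₂ (S₁ (x n))) q := by
    funext n; simp only [ha, hbdef]; ring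
  have hta : Tendsto a atTop (nhds 0) :=
    squeeze_zero hanneg (fun n => le_add_of_nonneg_right (hbnneg n)) (hsum ▸ hgap0)
  have htb : Tendsto b atTop (nhds 0) :=
    squeeze_zero hbnneg (fun n => le_add_of_nonneg_left (hanneg n)) (hsum ▸ hgap0)
  have hd1 : Tendsto (fun n => dist (x n) (S₁ (x n))) atTop (nhds 0) := h₁.2 x hb q hp1 hta
  obtain ⟨C, hC⟩ := bdd_dist' hb q
  have hbS : Bornology.IsBounded (Set.range fun n => S₁ (x n)) :=
    bdd_of_dist_le' q (C := C) (fun n => by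
      have := h₁.1.2 (x n) q hp1
      calc dist q (S₁ (x n)) = dist (S₁ (x n)) q := dist_comm _ _
      _ ≤ dist (x n) q := this
      _ = dist q (x n) := dist_comm _ _
      _ ≤ C := hC n)
  have hd2 : Tendsto (fun n => dist (S₁ (x n)) (S₂ (S₁ (x n)))) atTop (nhds 0) :=
    h₂.2 (fun n => S₁ (x n)) hbS q hp2 htb
  have hz1 : z ∈ FixSet S₁ := hd₁ x z hx hd1
  have hxS : DeltaConv (fun n => S₁ (x n)) z := deltaConv_of_close' hx hbS hd1
  have hz2 : z ∈ FixSet S₂ := hd₂ (fun n => S₁ (x n)) z hxS hd2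
  rw [hfix]; exact ⟨hz1, hz2⟩


theorem stmt10 {X : Type*} [MetricSpace X] (hX : IsHadamard X) (S₁ S₂ : X → X)
    (h₁ : StronglyQuasiNonexpansive S₁) (h₂ : StronglyQuasiNonexpansive S₂)
    (hd₁ : DeltaDemiclosed S₁) (hd₂ : DeltaDemiclosed S₂)
    (hInt : (FixSet S₁ ∩ FixSet S₂).Nonempty) :
    StronglyQuasiNonexpansive (S₂ ∘ S₁) ∧ OrbitalDeltaDemiclosed (S₂ ∘ S₁) := by
  obtain ⟨h, hd⟩ := stmt10_aux S₁ S₂ h₁ h₂ hd₁ hd₂ hInt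
  exact ⟨h, fun x z _ hx ht => hd x z hx ht⟩
end

section
/- Let X be a complete CAT(0) space and C₁, …, Cₘ nonempty closed convex subsets with ⋂ᵢ Cᵢ ≠ ∅, and let P_{Cᵢ} denote the metric projection onto Cᵢ. Then for any x₀ ∈ X the cyclic projection iterates xₙ := (P_{Cₘ} ∘ ⋯ ∘ P_{C₁})ⁿ(x₀) Δ-converge to some x* ∈ ⋂ᵢ₌₁ᵐ Cᵢ. -/
open Filter Metric

set_option maxHeartbeats 1600000

variable {X : Type*} [MetricSpace X]

section CPAux

variable {X : Type*} [MetricSpace X]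

private lemma le_of_forall_eps {a b : ℝ} (h : ∀ ε : ℝ, 0 < ε → a ≤ b + ε) : a ≤ b := by
  by_contra hc
  push_neg at hc
  have := h ((a - b) / 2) (by linarith)
  linarith

private lemma my_cobdd {a : ℕ → ℝ} (h : ∀ n, 0 ≤ a n) :
    Filter.IsCoboundedUnder (· ≤ ·) (atTop : Filter ℕ) a :=
  Filter.IsBoundedUnder.isCoboundedUnder_le (Filter.isBoundedUnder_of ⟨0, h⟩)

private lemma my_limsup_le {a : ℕ → ℝ} (h0 : ∀ n, 0 ≤ a n) {B : ℝ}
    (h : ∀ᶠ n in (atTop : Filter ℕ), a n ≤ B) : limsup a atTop ≤ B :=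
  Filter.limsup_le_of_le (my_cobdd h0) h

private lemma my_le_limsup {a : ℕ → ℝ} {M : ℝ} (hM : ∀ n, a n ≤ M) {b : ℝ}
    (h : ∀ n, b ≤ a n) : b ≤ limsup a atTop :=
  Filter.le_limsup_of_frequently_le (Filter.Frequently.of_forall h)
    (Filter.isBoundedUnder_of ⟨M, hM⟩)

private lemma my_ev_lt {a : ℕ → ℝ} {M : ℝ} (hM : ∀ n, a n ≤ M) {b : ℝ}
    (h : limsup a atTop < b) : ∀ᶠ n in (atTop : Filter ℕ), a n < b :=
  Filter.eventually_lt_of_limsup_lt h (Filter.isBoundedUnder_of ⟨M, hM⟩)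

/-- Key inequality for metric projections in a Hadamard space:
`dist (P x) q ^ 2 + dist x (P x) ^ 2 ≤ dist x q ^ 2` for `q ∈ C`. -/
private lemma proj_key (hX : IsHadamard X) {C : Set X} (hcv : GConvex C)
    {P : X → X} (hPm : ∀ w : X, P w ∈ C ∧ ∀ y ∈ C, dist w (P w) ≤ dist w y) :
    ∀ x q, q ∈ C → dist (P x) q ^ 2 + dist x (P x) ^ 2 ≤ dist x q ^ 2 := by
  choose mid hm1 hm2 hm3 using hX.2
  intro x q hq
  set c : ℕ → X := fun k => (fun z => mid (P x) z)^[k] q with hcdef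
  have hc0 : c 0 = q := rfl
  have hcs : ∀ k, c (k + 1) = mid (P x) (c k) := by
    intro k
    simp only [hcdef, Function.iterate_succ_apply']
  have main : ∀ k : ℕ, c k ∈ C ∧ dist (P x) (c k) = dist (P x) q * (1/2)^k ∧
      dist x (c k) ^ 2 ≤ (1 - (1/2)^k) * dist x (P x) ^ 2 + (1/2)^k * dist x q ^ 2
        - (1/2)^k * (1 - (1/2)^k) * dist (P x) q ^ 2 := by
    intro k
    induction k with
    | zero =>
      refine ⟨by rw [hc0]; exact hq, by rw [hc0]; norm_num, by rw [hc0]; norm_num⟩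
    | succ k ih =>
      obtain ⟨hmem, hdist, hineq⟩ := ih
      have h1' := hm1 (P x) (c k)
      have h2' := hm2 (P x) (c k)
      have h3' := hm3 (P x) (c k) x
      have hmem' : c (k + 1) ∈ C := by
        rw [hcs]
        refine hcv (P x) (hPm x).1 (c k) hmem (mid (P x) (c k)) ?_
        rw [h1', dist_comm (mid (P x) (c k)) (c k), h2']
        ring
      have hdist' : dist (P x) (c (k + 1)) = dist (P x) q * (1/2)^(k+1) := by
        rw [hcs, h1', hdist]; ring
      refine ⟨hmem', hdist', ?_⟩
      have hpow : ((1:ℝ)/2)^(k+1) = (1/2)^k * (1/2) := pow_succ _ _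
      have hd3 : dist x (c (k+1)) ^ 2 ≤
          (dist x (P x) ^ 2 + dist x (c k) ^ 2) / 2 - dist (P x) (c k) ^ 2 / 4 := by
        rw [hcs]; exact h3' 
      rw [hdist] at hd3
      rw [hpow]
      nlinarith [hd3, hineq]
  have hd_le : ∀ k, dist x (P x) ≤ dist x (c k) := fun k => (hPm x).2 _ (main k).1
  have hk : ∀ k : ℕ, (1 - (1/2:ℝ)^k) * dist (P x) q ^ 2 ≤
      dist x q ^ 2 - dist x (P x) ^ 2 := by
    intro k
    have h1 := (main k).2.2
    have h2 : dist x (P x) ^ 2 ≤ dist x (c k) ^ 2 :=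
      pow_le_pow_left₀ dist_nonneg (hd_le k) 2
    have ht : (0:ℝ) < (1/2)^k := by positivity
    have key : (1/2:ℝ)^k * ((1 - (1/2)^k) * dist (P x) q ^ 2) ≤
        (1/2:ℝ)^k * (dist x q ^ 2 - dist x (P x) ^ 2) := by nlinarith
    exact (mul_le_mul_iff_right₀ ht).mp key
  have hlim : Tendsto (fun k : ℕ => (1 - (1/2:ℝ)^k) * dist (P x) q ^ 2) atTop
      (nhds (dist (P x) q ^ 2)) := by
    have h0 : Tendsto (fun k : ℕ => ((1:ℝ)/2)^k) atTop (nhds 0) :=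
      tendsto_pow_atTop_nhds_zero_of_lt_one (by norm_num) (by norm_num)
    have h1 : Tendsto (fun k : ℕ => (1 - (1/2:ℝ)^k)) atTop (nhds (1 - 0)) :=
      (tendsto_const_nhds : Tendsto (fun _ : ℕ => (1:ℝ)) atTop (nhds 1)).sub h0
    have := h1.mul_const (dist (P x) q ^ 2)
    simpa using this
  have := le_of_tendsto' hlim hk
  linarith

/-- Every bounded sequence in a Hadamard space has an asymptotic center. -/
private lemma exists_center (hX : IsHadamard X) (v : ℕ → X)
    (hbv : ∀ y : X, ∃ M, ∀ n, dist y (v n) ≤ M) : ∃ z : X, AsympCenter v z := by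
  haveI : CompleteSpace X := hX.1
  choose mid hm1 hm2 hm3 using hX.2
  set f : X → ℝ := fun y => limsup (fun n => dist y (v n)) atTop with hf
  have hnonneg : ∀ y, 0 ≤ f y := by
    intro y
    obtain ⟨M, hM⟩ := hbv y
    exact my_le_limsup hM (fun n => dist_nonneg)
  have hlip : ∀ y y', f y ≤ dist y y' + f y' := by
    intro y y'
    obtain ⟨M, hM⟩ := hbv y'
    refine le_of_forall_eps fun ε hε => ?_
    have hev := my_ev_lt hM (lt_add_of_pos_right (f y') hε)
    have : ∀ᶠ n in (atTop : Filter ℕ), dist y (v n) ≤ dist y y' + f y' + ε := by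
      filter_upwards [hev] with n hn
      have := dist_triangle y y' (v n)
      linarith
    have h2 := my_limsup_le (fun n => dist_nonneg) this
    linarith [h2]
  haveI : Nonempty X := ⟨v 0⟩
  have hbdd : BddBelow (Set.range f) := ⟨0, by rintro _ ⟨y, rfl⟩; exact hnonneg y⟩
  set r := ⨅ y, f y with hr
  have hr0 : 0 ≤ r := le_ciInf hnonneg
  have hrle : ∀ y, r ≤ f y := fun y => ciInf_le hbdd y
  have hsel : ∀ k : ℕ, ∃ y, f y < r + 1 / (k + 1) := by
    intro k
    apply exists_lt_of_ciInf_lt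
    have : (0:ℝ) < 1 / (k + 1) := by positivity
    linarith
  choose y hy using hsel
  have hmid_est : ∀ p q' : X, ∀ ε : ℝ, 0 < ε →
      dist p q' ^ 2 ≤ 2 * (f p + ε) ^ 2 + 2 * (f q' + ε) ^ 2 - 4 * r ^ 2 := by
    intro p q' ε hε
    obtain ⟨Mp, hMp⟩ := hbv p
    obtain ⟨Mq, hMq⟩ := hbv q'
    set m' := mid p q' with hm'
    have hev : ∀ᶠ n in (atTop : Filter ℕ), dist m' (v n) ^ 2 ≤
        ((f p + ε) ^ 2 + (f q' + ε) ^ 2) / 2 - dist p q' ^ 2 / 4 := by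
      filter_upwards [my_ev_lt hMp (lt_add_of_pos_right (f p) hε),
        my_ev_lt hMq (lt_add_of_pos_right (f q') hε)] with n h1 h2
      have h3 := hm3 p q' (v n)
      rw [dist_comm m' (v n)]
      have hc1 : dist (v n) p = dist p (v n) := dist_comm _ _
      have hc2 : dist (v n) q' = dist q' (v n) := dist_comm _ _
      rw [hc1, hc2] at h3
      nlinarith [dist_nonneg (x := p) (y := v n), dist_nonneg (x := q') (y := v n),
        hnonneg p, hnonneg q']
    obtain ⟨n₀, hn₀⟩ := hev.exists
    have hRHS : 0 ≤ ((f p + ε) ^ 2 + (f q' + ε) ^ 2) / 2 - dist p q' ^ 2 / 4 :=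
      le_trans (sq_nonneg _) hn₀
    have hfm : f m' ≤ Real.sqrt (((f p + ε) ^ 2 + (f q' + ε) ^ 2) / 2 - dist p q' ^ 2 / 4) := by
      apply my_limsup_le (fun n => dist_nonneg)
      filter_upwards [hev] with n hn
      exact Real.le_sqrt_of_sq_le hn
    have hrm : r ≤ f m' := hrle m'
    have hsq := Real.sq_sqrt hRHS
    have hr2 : r ^ 2 ≤ ((f p + ε) ^ 2 + (f q' + ε) ^ 2) / 2 - dist p q' ^ 2 / 4 := by
      have h4 : r ≤ Real.sqrt (((f p + ε) ^ 2 + (f q' + ε) ^ 2) / 2 - dist p q' ^ 2 / 4) :=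
        le_trans hrm hfm
      nlinarith [Real.sqrt_nonneg (((f p + ε) ^ 2 + (f q' + ε) ^ 2) / 2 - dist p q' ^ 2 / 4)]
    linarith
  have hcauchy : CauchySeq y := by
    rw [Metric.cauchySeq_iff]
    intro δ hδ
    set h : ℝ := min 1 (δ ^ 2 / (2 * (8 * r + 8))) with hhdef
    have hh0 : 0 < h := by
      apply lt_min one_pos
      positivity
    have hh1 : h ≤ 1 := min_le_left _ _
    have hh2 : h * (8 * r + 8) ≤ δ ^ 2 / 2 := by
      have := min_le_right 1 (δ ^ 2 / (2 * (8 * r + 8)))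
      have hpos : (0:ℝ) < 8 * r + 8 := by linarith
      calc h * (8 * r + 8) ≤ δ ^ 2 / (2 * (8 * r + 8)) * (8 * r + 8) := by
            apply mul_le_mul_of_nonneg_right this hpos.le
        _ = δ ^ 2 / 2 := by field_simp
    obtain ⟨N, hN⟩ := exists_nat_gt (2 / h)
    refine ⟨N, fun j hj k hk => ?_⟩
    have hinv : ∀ i : ℕ, N ≤ i → (1:ℝ) / (i + 1) < h / 2 := by
      intro i hi
      have h1 : (2:ℝ) / h < i + 1 := by
        calc (2:ℝ) / h < N := hN
          _ ≤ i := by exact_mod_cast hi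
          _ < i + 1 := by linarith
      rw [div_lt_div_iff₀ (by positivity) (by norm_num)]
      have := (div_lt_iff₀ hh0).mp h1
      nlinarith
    have hfj : f (y j) + h / 2 < r + h := by
      have := hy j
      have := hinv j hj
      linarith
    have hfk : f (y k) + h / 2 < r + h := by
      have := hy k
      have := hinv k hk
      linarith
    have hest := hmid_est (y j) (y k) (h / 2) (by positivity)
    have hd2 : dist (y j) (y k) ^ 2 < δ ^ 2 := by
      have hb1 : 0 ≤ f (y j) + h / 2 := by have := hnonneg (y j); positivity
      have hb2 : 0 ≤ f (y k) + h / 2 := by have := hnonneg (y k); positivity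
      have hs1 : (f (y j) + h / 2) ^ 2 ≤ (r + h) ^ 2 := by nlinarith
      have hs2 : (f (y k) + h / 2) ^ 2 ≤ (r + h) ^ 2 := by nlinarith
      have : dist (y j) (y k) ^ 2 ≤ 4 * (r + h) ^ 2 - 4 * r ^ 2 := by linarith
      have hexp : 4 * (r + h) ^ 2 - 4 * r ^ 2 = 8 * r * h + 4 * h ^ 2 := by ring
      have hfin : 8 * r * h + 4 * h ^ 2 ≤ h * (8 * r + 8) := by nlinarith
      have hδ2 : 0 < δ ^ 2 := by positivity
      linarith
    exact lt_of_pow_lt_pow_left₀ 2 hδ.le hd2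
  obtain ⟨z, hz⟩ := cauchySeq_tendsto_of_complete hcauchy
  refine ⟨z, fun y' => ?_⟩
  have hzr : f z ≤ r := by
    refine le_of_forall_eps fun ε hε => ?_
    obtain ⟨N1, hN1⟩ := (Metric.tendsto_atTop.mp hz) (ε / 4) (by positivity)
    obtain ⟨N2, hN2⟩ := exists_nat_gt (2 / ε)
    set k := max N1 N2 with hk
    have h1 : dist (y k) z < ε / 4 := hN1 k (le_max_left _ _)
    have h2 : (1:ℝ) / (k + 1) < ε / 2 := by
      have hk2 : (2:ℝ) / ε < k + 1 := by
        calc (2:ℝ) / ε < N2 := hN2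
          _ ≤ k := by exact_mod_cast le_max_right N1 N2
          _ < k + 1 := by linarith
      rw [div_lt_div_iff₀ (by positivity) (by norm_num)]
      have := (div_lt_iff₀ hε).mp hk2
      nlinarith
    have h3 := hlip z (y k)
    have h4 := hy k
    have h5 : dist z (y k) = dist (y k) z := dist_comm _ _
    linarith
  exact le_trans hzr (hrle y')

/-- An asymptotic center of a sequence approaching `C` is a fixed point of the
projection; hence it lies in `C`. -/
private lemma center_mem {C : Set X} {P : X → X}
    (hPm : ∀ w : X, P w ∈ C ∧ ∀ y ∈ C, dist w (P w) ≤ dist w y)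
    (hkey : ∀ x q, q ∈ C → dist (P x) q ^ 2 + dist x (P x) ^ 2 ≤ dist x q ^ 2)
    (v : ℕ → X) (hbv : ∀ y : X, ∃ M, ∀ n, dist y (v n) ≤ M)
    (c : ℕ → X) (hc : ∀ n, c n ∈ C)
    (hvc : Tendsto (fun n => dist (v n) (c n)) atTop (nhds 0))
    (w : X) (hw : AsympCenter v w) : w ∈ C := by
  set d := dist w (P w) with hd
  set L := limsup (fun n => dist w (v n)) atTop with hL
  obtain ⟨Mw, hMw⟩ := hbv w
  have hL0 : 0 ≤ L := my_le_limsup hMw (fun n => dist_nonneg)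
  have hmain : ∀ ε : ℝ, 0 < ε → ε ≤ 1 → d ^ 2 ≤ ε * (6 * L + 9) := by
    intro ε hε hε1
    have hev1 : ∀ᶠ n in (atTop : Filter ℕ), dist w (v n) < L + ε :=
      my_ev_lt hMw (lt_add_of_pos_right L hε)
    have hev2 : ∀ᶠ n in (atTop : Filter ℕ), dist (v n) (c n) < ε :=
      hvc.eventually (eventually_lt_nhds hε)
    have hev3 : ∀ᶠ n in (atTop : Filter ℕ), dist w (c n) < L + 2 * ε := by
      filter_upwards [hev1, hev2] with n h1 h2
      have := dist_triangle w (v n) (c n)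
      linarith
    have hkey' : ∀ n, dist (P w) (c n) ^ 2 + d ^ 2 ≤ dist w (c n) ^ 2 :=
      fun n => hkey w (c n) (hc n)
    obtain ⟨n₁, hn₁⟩ := hev3.exists
    have hdLE : d ^ 2 ≤ (L + 2 * ε) ^ 2 := by
      have := hkey' n₁
      nlinarith [sq_nonneg (dist (P w) (c n₁)), dist_nonneg (x := w) (y := c n₁)]
    rcases le_or_gt ε L with hcase | hcase
    · -- ε ≤ L
      have hPb : ∀ᶠ n in (atTop : Filter ℕ),
          dist (P w) (v n) ≤ Real.sqrt ((L + 2 * ε) ^ 2 - d ^ 2) + ε := by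
        filter_upwards [hev2, hev3] with n h2 h3
        have h4 : dist (P w) (c n) ^ 2 ≤ (L + 2 * ε) ^ 2 - d ^ 2 := by
          have := hkey' n
          nlinarith [dist_nonneg (x := w) (y := c n)]
        have h5 : dist (P w) (c n) ≤ Real.sqrt ((L + 2 * ε) ^ 2 - d ^ 2) :=
          Real.le_sqrt_of_sq_le h4
        have h6 := dist_triangle (P w) (c n) (v n)
        have h7 : dist (c n) (v n) = dist (v n) (c n) := dist_comm _ _
        linarith
      have hfP : limsup (fun n => dist (P w) (v n)) atTop ≤
          Real.sqrt ((L + 2 * ε) ^ 2 - d ^ 2) + ε :=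
        my_limsup_le (fun n => dist_nonneg) hPb
      have hcen : L ≤ limsup (fun n => dist (P w) (v n)) atTop := hw (P w)
      have h8 : L - ε ≤ Real.sqrt ((L + 2 * ε) ^ 2 - d ^ 2) := by linarith
      have h9 : (L - ε) ^ 2 ≤ (L + 2 * ε) ^ 2 - d ^ 2 := by
        have hRHS0 : 0 ≤ (L + 2 * ε) ^ 2 - d ^ 2 := by
          have := hkey' n₁
          nlinarith [sq_nonneg (dist (P w) (c n₁)), dist_nonneg (x := w) (y := c n₁)]
        exact (Real.le_sqrt (by linarith) hRHS0).mp h8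
      nlinarith
    · -- L < ε
      nlinarith
  have hd0 : d = 0 := by
    by_contra hne
    have hdpos : 0 < d ^ 2 := by
      have : 0 ≤ d := dist_nonneg
      have : d ≠ 0 := hne
      positivity
    have hK : (0:ℝ) < 6 * L + 9 := by linarith
    set ε := min 1 (d ^ 2 / (2 * (6 * L + 9))) with hεdef
    have hε0 : 0 < ε := lt_min one_pos (by positivity)
    have hε1 : ε ≤ 1 := min_le_left _ _
    have := hmain ε hε0 hε1
    have h2 : ε * (6 * L + 9) ≤ d ^ 2 / 2 := by
      have h3 := min_le_right 1 (d ^ 2 / (2 * (6 * L + 9)))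
      calc ε * (6 * L + 9) ≤ d ^ 2 / (2 * (6 * L + 9)) * (6 * L + 9) :=
            mul_le_mul_of_nonneg_right h3 hK.le
        _ = d ^ 2 / 2 := by field_simp
    linarith
  have : P w = w := by
    have := hd0
    rw [hd, dist_comm] at this
    exact dist_eq_zero.mp this
  exact this ▸ (hPm w).1

end CPAux

theorem stmt12 {X : Type*} [MetricSpace X] (hX : IsHadamard X) (m : ℕ)
    (C : ℕ → Set X)
    (hne : ∀ i < m, (C i).Nonempty) (hcl : ∀ i < m, IsClosed (C i))
    (hcv : ∀ i < m, GConvex (C i))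
    (hInt : (⋂ i ∈ Finset.range m, C i).Nonempty)
    (P : ℕ → X → X)
    (hP : ∀ i < m, ∀ x : X, P i x ∈ C i ∧ ∀ y ∈ C i, dist x (P i x) ≤ dist x y)
    (x₀ : X) :
    ∃ z : X, z ∈ ⋂ i ∈ Finset.range m, C i ∧
      DeltaConv (fun n : ℕ => (compUpTo P m)^[n] x₀) z := by
  classical
  obtain ⟨q, hq⟩ := hInt
  have hqC : ∀ i < m, q ∈ C i := by
    intro i hi
    exact Set.mem_iInter₂.mp hq i (Finset.mem_range.mpr hi)
  have hkey : ∀ i < m, ∀ x q', q' ∈ C i →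
      dist (P i x) q' ^ 2 + dist x (P i x) ^ 2 ≤ dist x q' ^ 2 :=
    fun i hi => proj_key hX (hcv i hi) (hP i hi)
  set T : X → X := compUpTo P m with hT
  set x : ℕ → X := fun n => T^[n] x₀ with hxdef
  -- chain monotonicity for any common point
  have hchain : ∀ (q' : X), (∀ i < m, q' ∈ C i) → ∀ w : X, ∀ i, i ≤ m → ∀ j, j ≤ i →
      dist (compUpTo P i w) q' ≤ dist (compUpTo P j w) q' := by
    intro q' hq' w i
    induction i with
    | zero =>
      intro _ j hj
      have : j = 0 := Nat.le_zero.mp hj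
      subst this; exact le_rfl
    | succ i ih =>
      intro him j hj
      have hstep : dist (compUpTo P (i+1) w) q' ≤ dist (compUpTo P i w) q' := by
        have hk := hkey i (by omega) (compUpTo P i w) q' (hq' i (by omega))
        have h0 : compUpTo P (i+1) w = P i (compUpTo P i w) := rfl
        rw [h0]
        refine le_of_pow_le_pow_left₀ two_ne_zero dist_nonneg ?_
        nlinarith [sq_nonneg (dist (compUpTo P i w) (P i (compUpTo P i w)))]
      rcases Nat.lt_or_ge j (i+1) with hlt | hge
      · exact le_trans hstep (ih (by omega) j (Nat.lt_succ_iff.mp hlt))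
      · have : j = i + 1 := le_antisymm hj hge
        subst this; exact le_rfl
  have hfejer : ∀ (q' : X), (∀ i < m, q' ∈ C i) → ∀ w : X, dist (T w) q' ≤ dist w q' := by
    intro q' hq' w
    have := hchain q' hq' w m le_rfl 0 (Nat.zero_le m)
    simpa [compUpTo] using this
  have hxsucc : ∀ n, x (n+1) = T (x n) := by
    intro n
    simp only [hxdef]
    exact Function.iterate_succ_apply' T n x₀
  -- Fejér monotone distance to q
  set D : ℕ → ℝ := fun n => dist (x n) q with hD
  have hDsucc : ∀ n, D (n+1) ≤ D n := by
    intro n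
    simp only [hD]
    rw [hxsucc]
    exact hfejer q hqC (x n)
  have hDanti : Antitone D := antitone_nat_of_succ_le hDsucc
  have hDbdd : BddBelow (Set.range D) := ⟨0, by rintro _ ⟨n, rfl⟩; exact dist_nonneg⟩
  have hDlim : Tendsto D atTop (nhds (⨅ n, D n)) := tendsto_atTop_ciInf hDanti hDbdd
  have hδ0 : Tendsto (fun n => D n ^ 2 - D (n+1) ^ 2) atTop (nhds 0) := by
    have h1 : Tendsto (fun n => D (n+1)) atTop (nhds (⨅ n, D n)) :=
      hDlim.comp (tendsto_add_atTop_nat 1)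
    have h2 := (hDlim.mul hDlim).sub (h1.mul h1)
    simp only [sub_self] at h2
    simpa [pow_two] using h2
  -- boundedness
  have hbx : ∀ y : X, ∃ M, ∀ n, dist y (x n) ≤ M := by
    intro y
    refine ⟨dist y q + D 0, fun n => ?_⟩
    have h1 := dist_triangle y q (x n)
    have h2 : dist q (x n) = D n := dist_comm q (x n)
    have h3 : D n ≤ D 0 := hDanti (Nat.zero_le n)
    linarith
  have hbounded : Bornology.IsBounded (Set.range x) := by
    apply (Metric.isBounded_closedBall (x := q) (r := D 0)).subset
    rintro _ ⟨n, rfl⟩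
    exact Metric.mem_closedBall.mpr (hDanti (Nat.zero_le n))
  -- step distances go to zero
  have hstep2 : ∀ j, j < m → ∀ n,
      dist (compUpTo P j (x n)) (compUpTo P (j+1) (x n)) ^ 2 ≤ D n ^ 2 - D (n+1) ^ 2 := by
    intro j hj n
    have hk := hkey j hj (compUpTo P j (x n)) q (hqC j hj)
    have h1 : dist (compUpTo P j (x n)) q ≤ D n := by
      have := hchain q hqC (x n) j (le_of_lt hj) 0 (Nat.zero_le j)
      simpa [compUpTo, hD] using this
    have h2 : D (n+1) ≤ dist (compUpTo P (j+1) (x n)) q := by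
      have h3 := hchain q hqC (x n) m le_rfl (j+1) hj
      have h4 : D (n+1) = dist (compUpTo P m (x n)) q := by
        simp only [hD]
        rw [hxsucc]
      rw [h4]
      exact h3
    have h5 : dist (compUpTo P j (x n)) q ^ 2 ≤ D n ^ 2 :=
      pow_le_pow_left₀ dist_nonneg h1 2
    have h6 : D (n+1) ^ 2 ≤ dist (compUpTo P (j+1) (x n)) q ^ 2 :=
      pow_le_pow_left₀ dist_nonneg h2 2
    have h7 : compUpTo P (j+1) (x n) = P j (compUpTo P j (x n)) := rfl
    rw [h7]
    rw [h7] at h6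
    linarith
  have hstep0 : ∀ j, j < m → Tendsto
      (fun n => dist (compUpTo P j (x n)) (compUpTo P (j+1) (x n))) atTop (nhds 0) := by
    intro j hj
    have hg : Tendsto (fun n => Real.sqrt (D n ^ 2 - D (n+1) ^ 2)) atTop (nhds 0) := by
      have := (Real.continuous_sqrt.tendsto 0).comp hδ0
      simpa [Function.comp_def] using this
    refine squeeze_zero (fun n => dist_nonneg) (fun n => ?_) hg
    exact Real.le_sqrt_of_sq_le (hstep2 j hj n)
  have hnear : ∀ i, i ≤ m → Tendsto
      (fun n => dist (x n) (compUpTo P i (x n))) atTop (nhds 0) := by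
    intro i
    induction i with
    | zero =>
      intro _
      simpa [compUpTo] using (tendsto_const_nhds : Tendsto (fun _ : ℕ => (0:ℝ)) atTop (nhds 0))
    | succ i ih =>
      intro him
      have h1 := ih (by omega)
      have h2 := hstep0 i (by omega)
      have hsum := h1.add h2
      rw [add_zero] at hsum
      refine squeeze_zero (fun n => dist_nonneg) (fun n => ?_) hsum
      exact dist_triangle (x n) (compUpTo P i (x n)) (compUpTo P (i+1) (x n))
  -- any asymptotic center of a subsequence lies in every C i
  have hcenter_mem : ∀ (φ : ℕ → ℕ), StrictMono φ → ∀ w : X,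
      AsympCenter (x ∘ φ) w → ∀ i < m, w ∈ C i := by
    intro φ hφ w hw i hi
    refine center_mem (hP i hi) (hkey i hi) (x ∘ φ) ?_
      (fun n => compUpTo P (i+1) (x (φ n))) (fun n => (hP i hi (compUpTo P i (x (φ n)))).1)
      ?_ w hw
    · intro y
      obtain ⟨M, hM⟩ := hbx y
      exact ⟨M, fun n => hM (φ n)⟩
    · have := (hnear (i+1) hi).comp hφ.tendsto_atTop
      simpa [Function.comp_def] using this
  -- limits of distances from points of the intersection
  have hlimF : ∀ w : X, (∀ i < m, w ∈ C i) →
      ∃ l : ℝ, 0 ≤ l ∧ Tendsto (fun n => dist w (x n)) atTop (nhds l) := by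
    intro w hw
    have hanti : Antitone (fun n => dist w (x n)) := by
      apply antitone_nat_of_succ_le
      intro n
      rw [hxsucc, dist_comm w (T (x n)), dist_comm w (x n)]
      exact hfejer w hw (x n)
    refine ⟨⨅ n, dist w (x n), le_ciInf (fun n => dist_nonneg), ?_⟩
    exact tendsto_atTop_ciInf hanti ⟨0, by rintro _ ⟨n, rfl⟩; exact dist_nonneg⟩
  -- the asymptotic center of the full sequence
  obtain ⟨z, hz⟩ := exists_center hX x hbx
  have hzC : ∀ i < m, z ∈ C i := hcenter_mem id strictMono_id z hz
  obtain ⟨lz, hlz0, hlz⟩ := hlimF z hzC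
  refine ⟨z, ?_, hbounded, ?_⟩
  · exact Set.mem_iInter₂.mpr fun i hi => hzC i (Finset.mem_range.mp hi)
  · intro φ hφ
    obtain ⟨w, hwAC⟩ := exists_center hX (x ∘ φ) (by
      intro y
      obtain ⟨M, hM⟩ := hbx y
      exact ⟨M, fun n => hM (φ n)⟩)
    have hwC : ∀ i < m, w ∈ C i := hcenter_mem φ hφ w hwAC
    obtain ⟨lw, hlw0, hlw⟩ := hlimF w hwC
    have hlzφ : Tendsto (fun n => dist z ((x ∘ φ) n)) atTop (nhds lz) := by
      have := hlz.comp hφ.tendsto_atTop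
      simpa [Function.comp_def] using this
    have hlwφ : Tendsto (fun n => dist w ((x ∘ φ) n)) atTop (nhds lw) := by
      have := hlw.comp hφ.tendsto_atTop
      simpa [Function.comp_def] using this
    have eq1 : limsup (fun n => dist z ((x ∘ φ) n)) atTop = lz := hlzφ.limsup_eq
    have eq2 : limsup (fun n => dist w ((x ∘ φ) n)) atTop = lw := hlwφ.limsup_eq
    have hle1 : lw ≤ lz := by
      have := hwAC z
      rwa [eq1, eq2] at this
    have hle2 : lz ≤ lw := by
      have := hz w
      rwa [hlz.limsup_eq, hlw.limsup_eq] at this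
    -- uniqueness via the midpoint
    choose midf hm1 hm2 hm3 using hX.2
    set mzw := midf z w with hmzw
    have hmC : ∀ i < m, mzw ∈ C i := by
      intro i hi
      refine hcv i hi z (hzC i hi) w (hwC i hi) mzw ?_
      have h1 := hm1 z w
      have h2 := hm2 z w
      rw [dist_comm w mzw] at h2
      rw [h1, h2]
      ring
    obtain ⟨lm, hlm0, hlm⟩ := hlimF mzw hmC
    have hzlm : lz ≤ lm := by
      have := hz mzw
      rwa [hlz.limsup_eq, hlm.limsup_eq] at this
    have hCN : ∀ n, dist mzw (x n) ^ 2 ≤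
        (dist z (x n) ^ 2 + dist w (x n) ^ 2) / 2 - dist z w ^ 2 / 4 := by
      intro n
      have h3 := hm3 z w (x n)
      rw [dist_comm mzw (x n), dist_comm z (x n), dist_comm w (x n)]
      exact h3
    have hlim1 : Tendsto (fun n => dist mzw (x n) ^ 2) atTop (nhds (lm ^ 2)) := by
      have := hlm.mul hlm
      simpa [pow_two] using this
    have hlim2 : Tendsto
        (fun n => (dist z (x n) ^ 2 + dist w (x n) ^ 2) / 2 - dist z w ^ 2 / 4) atTop
        (nhds ((lz ^ 2 + lw ^ 2) / 2 - dist z w ^ 2 / 4)) := by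
      have hz2 : Tendsto (fun n => dist z (x n) ^ 2) atTop (nhds (lz ^ 2)) := by
        have := hlz.mul hlz
        simpa [pow_two] using this
      have hw2 : Tendsto (fun n => dist w (x n) ^ 2) atTop (nhds (lw ^ 2)) := by
        have := hlw.mul hlw
        simpa [pow_two] using this
      exact ((hz2.add hw2).div_const 2).sub tendsto_const_nhds
    have hfin : lm ^ 2 ≤ (lz ^ 2 + lw ^ 2) / 2 - dist z w ^ 2 / 4 :=
      le_of_tendsto_of_tendsto' hlim1 hlim2 hCN
    have hzw2 : dist z w ^ 2 ≤ 0 := by nlinarith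
    have hzw : dist z w = 0 := by
      have h1 : dist z w ^ 2 = 0 := le_antisymm hzw2 (sq_nonneg _)
      exact pow_eq_zero_iff two_ne_zero |>.mp h1
    have hzeqw : z = w := dist_eq_zero.mp hzw
    rw [hzeqw]
    exact hwAC
end

section
/- Let X be a complete CAT(0) space, C₁, …, Cₘ nonempty closed convex subsets with ⋂ᵢ Cᵢ ≠ ∅, and suppose Cₘ is compact. Then for any x₀ ∈ X the cyclic projection iterates xₙ := (P_{Cₘ} ∘ ⋯ ∘ P_{C₁})ⁿ(x₀) converge strongly (in the metric) to some point x* ∈ ⋂ᵢ Cᵢ. -/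
open Filter Metric

variable {X : Type*} [MetricSpace X]

lemma firm_aux {X : Type*} [MetricSpace X] (hX : IsHadamard X) {C : Set X}
    (hcv : GConvex C) {x p q : X} (hp : p ∈ C) (hq : q ∈ C)
    (hmin : ∀ y ∈ C, dist x p ≤ dist x y) :
    dist x p ^ 2 + dist p q ^ 2 ≤ dist x q ^ 2 := by
  classical
  set M : X → X → X := fun a b => Classical.choose (hX.2 a b) with hM
  have hMspec : ∀ a b : X, dist a (M a b) = dist a b / 2 ∧ dist b (M a b) = dist a b / 2 ∧
      ∀ z : X, dist z (M a b) ^ 2 ≤ (dist z a ^ 2 + dist z b ^ 2) / 2 - dist a b ^ 2 / 4 :=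
    fun a b => Classical.choose_spec (hX.2 a b)
  set y : ℕ → X := fun k => (M p)^[k] q with hy
  have hy0 : y 0 = q := rfl
  have hys : ∀ k, y (k + 1) = M p (y k) := fun k => Function.iterate_succ_apply' _ _ _
  set a := dist x p ^ 2 with ha
  set b := dist x q ^ 2 with hb
  set c := dist p q with hc
  have hmem : ∀ k, y k ∈ C := by
    intro k
    induction k with
    | zero => exact hq
    | succ k ih =>
      have h1 := (hMspec p (y k)).1
      have h2 := (hMspec p (y k)).2.1
      refine hcv p hp (y k) ih (y (k + 1)) ?_
      rw [hys k, dist_comm (M p (y k)) (y k)]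
      rw [h1, h2]; ring
  have hdist : ∀ k, dist p (y k) = c / 2 ^ k := by
    intro k
    induction k with
    | zero => simp [hy0, hc]
    | succ k ih =>
      rw [hys k, (hMspec p (y k)).1, ih, pow_succ]
      ring
  have key : ∀ k : ℕ, (2:ℝ) ^ k * (dist x (y k) ^ 2 - a) + c ^ 2 * (1 - (1/2:ℝ) ^ k) ≤ b - a := by
    intro k
    induction k with
    | zero => simp [hy0, hb]
    | succ k ih =>
      set t := (2:ℝ) ^ k with ht0
      set u := ((1:ℝ)/2) ^ k with hu0
      have ht : (0:ℝ) < t := pow_pos two_pos k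
      have htu : t * u = 1 := by
        rw [ht0, hu0, ← mul_pow]; norm_num
      have hu : u = 1 / t := by
        field_simp at htu ⊢; linarith [htu]
      have hcn := (hMspec p (y k)).2.2 x
      rw [← hys k] at hcn
      have hdk : dist p (y k) = c * u := by
        rw [hdist k, hu]; field_simp; rw [ht0]
      rw [hdk] at hcn
      set d := dist x (y k) ^ 2 with hd0
      set d' := dist x (y (k+1)) ^ 2 with hd'0
      have htu2 : t * u ^ 2 = u := by
        rw [pow_two, ← mul_assoc, htu, one_mul]
      rw [← ha] at hcn
      have h1 : 2 * t * d' ≤ 2 * t * ((a + d) / 2 - (c * u) ^ 2 / 4) :=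
        mul_le_mul_of_nonneg_left hcn (by positivity)
      have h2 : 2 * t * ((a + d) / 2 - (c * u) ^ 2 / 4) = t * a + t * d - c ^ 2 * (t * u ^ 2) / 2 := by
        ring
      rw [h2, htu2] at h1
      have e1 : ((2:ℝ)) ^ (k+1) = 2 * t := by rw [pow_succ]; ring
      have e2 : ((1:ℝ)/2) ^ (k+1) = u / 2 := by rw [pow_succ]; ring
      rw [e1, e2]
      nlinarith [ih, h1]
  have hale : ∀ k, a ≤ dist x (y k) ^ 2 := by
    intro k
    exact pow_le_pow_left₀ dist_nonneg (hmin _ (hmem k)) 2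
  have hfin : ∀ k : ℕ, c ^ 2 * (1 - (1/2:ℝ) ^ k) ≤ b - a := by
    intro k
    have h0 : (0:ℝ) ≤ (2:ℝ)^k * (dist x (y k) ^ 2 - a) :=
      mul_nonneg (by positivity) (sub_nonneg.2 (hale k))
    linarith [key k, h0]
  have hlim : Tendsto (fun k : ℕ => c ^ 2 * (1 - (1/2:ℝ) ^ k)) atTop (nhds (c^2)) := by
    have : Tendsto (fun k : ℕ => ((1:ℝ)/2) ^ k) atTop (nhds 0) :=
      tendsto_pow_atTop_nhds_zero_of_lt_one (by norm_num) (by norm_num)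
    have := (tendsto_const_nhds (x := (1:ℝ))).sub this
    have := (tendsto_const_nhds (x := c^2)).mul this
    simpa using this
  have : c ^ 2 ≤ b - a := le_of_tendsto' hlim hfin
  linarith

theorem stmt13 {X : Type*} [MetricSpace X] (hX : IsHadamard X) (m : ℕ) (hm : 1 ≤ m)
    (C : ℕ → Set X)
    (hne : ∀ i < m, (C i).Nonempty) (hcl : ∀ i < m, IsClosed (C i))
    (hcv : ∀ i < m, GConvex (C i))
    (hInt : (⋂ i ∈ Finset.range m, C i).Nonempty)
    (hcpt : IsCompact (C (m - 1)))
    (P : ℕ → X → X)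
    (hP : ∀ i < m, ∀ x : X, P i x ∈ C i ∧ ∀ y ∈ C i, dist x (P i x) ≤ dist x y)
    (x₀ : X) :
    ∃ z : X, z ∈ (⋂ i ∈ Finset.range m, C i) ∧
      Tendsto (fun n : ℕ => (compUpTo P m)^[n] x₀) atTop (nhds z) := by
  classical
  set T : X → X := compUpTo P m with hT
  have hsucc : ∀ (k : ℕ) (x : X), compUpTo P (k + 1) x = P k (compUpTo P k x) :=
    fun _ _ => rfl
  have h0 : ∀ x : X, compUpTo P 0 x = x := fun _ => rfl
  -- firm inequality for each projection
  have hstep : ∀ i < m, ∀ x q : X, q ∈ C i →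
      dist x (P i x) ^ 2 + dist (P i x) q ^ 2 ≤ dist x q ^ 2 := by
    intro i hi x q hq
    exact firm_aux hX (hcv i hi) (hP i hi x).1 hq (fun y hy => (hP i hi x).2 y hy)
  have hqne : ∀ i < m, ∀ x q : X, q ∈ C i → dist (P i x) q ≤ dist x q := by
    intro i hi x q hq
    have h := hstep i hi x q hq
    nlinarith [dist_nonneg (x := P i x) (y := q), dist_nonneg (x := x) (y := q),
      sq_nonneg (dist x (P i x))]
  -- chain monotonicity along a cycle
  have hchain : ∀ q : X, (∀ i < m, q ∈ C i) → ∀ x : X, ∀ j k : ℕ, j ≤ k → k ≤ m →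
      dist (compUpTo P k x) q ≤ dist (compUpTo P j x) q := by
    intro q hq x j k hjk
    induction k, hjk using Nat.le_induction with
    | base => intro _; exact le_rfl
    | succ k hk ih =>
      intro hkm
      have hklt : k < m := hkm
      calc dist (compUpTo P (k + 1) x) q = dist (P k (compUpTo P k x)) q := by rw [hsucc]
        _ ≤ dist (compUpTo P k x) q := hqne k hklt _ q (hq k hklt)
        _ ≤ dist (compUpTo P j x) q := ih (le_of_lt hklt)
  have hTle : ∀ q : X, (∀ i < m, q ∈ C i) → ∀ x : X, dist (T x) q ≤ dist x q := by
    intro q hq x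
    have := hchain q hq x 0 m (Nat.zero_le m) le_rfl
    rwa [h0] at this
  -- gap bound
  have hgap : ∀ q : X, (∀ i < m, q ∈ C i) → ∀ x : X, ∀ i < m,
      dist (compUpTo P i x) (compUpTo P (i + 1) x) ^ 2 ≤ dist x q ^ 2 - dist (T x) q ^ 2 := by
    intro q hq x i hi
    have h1 := hstep i hi (compUpTo P i x) q (hq i hi)
    rw [← hsucc i x] at h1
    have h2 : dist (compUpTo P i x) q ≤ dist x q := by
      have := hchain q hq x 0 i (Nat.zero_le i) (le_of_lt hi)
      rwa [h0] at this
    have h3 : dist (T x) q ≤ dist (compUpTo P (i + 1) x) q :=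
      hchain q hq x (i + 1) m hi le_rfl
    have h2' : dist (compUpTo P i x) q ^ 2 ≤ dist x q ^ 2 :=
      pow_le_pow_left₀ dist_nonneg h2 2
    have h3' : dist (T x) q ^ 2 ≤ dist (compUpTo P (i + 1) x) q ^ 2 :=
      pow_le_pow_left₀ dist_nonneg h3 2
    linarith
  -- distance to intermediates
  have hmid : ∀ q : X, (∀ i < m, q ∈ C i) → ∀ x : X, ∀ i ≤ m,
      dist x (compUpTo P i x) ≤ (i : ℝ) * Real.sqrt (dist x q ^ 2 - dist (T x) q ^ 2) := by
    intro q hq x i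
    induction i with
    | zero => intro _; simp [h0]
    | succ i ih =>
      intro him
      have hi : i < m := him
      have hih := ih (le_of_lt hi)
      have hg := hgap q hq x i hi
      have hs : dist (compUpTo P i x) (compUpTo P (i + 1) x) ≤
          Real.sqrt (dist x q ^ 2 - dist (T x) q ^ 2) := by
        rw [← Real.sqrt_sq (dist_nonneg (x := compUpTo P i x) (y := compUpTo P (i + 1) x))]
        exact Real.sqrt_le_sqrt hg
      calc dist x (compUpTo P (i + 1) x)
          ≤ dist x (compUpTo P i x) + dist (compUpTo P i x) (compUpTo P (i + 1) x) :=
            dist_triangle _ _ _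
        _ ≤ (i : ℝ) * Real.sqrt (dist x q ^ 2 - dist (T x) q ^ 2) +
            Real.sqrt (dist x q ^ 2 - dist (T x) q ^ 2) := add_le_add hih hs
        _ = ((i + 1 : ℕ) : ℝ) * Real.sqrt (dist x q ^ 2 - dist (T x) q ^ 2) := by
            push_cast; ring
  -- the iterate sequence
  set x : ℕ → X := fun n => T^[n] x₀ with hx
  have hxs : ∀ n, x (n + 1) = T (x n) := fun n => Function.iterate_succ_apply' _ _ _
  obtain ⟨q, hqI⟩ := hInt
  have hqmem : ∀ w : X, w ∈ (⋂ i ∈ Finset.range m, C i) → ∀ i < m, w ∈ C i := by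
    intro w hw i hi
    simp only [Set.mem_iInter, Finset.mem_range] at hw
    exact hw i hi
  have hq : ∀ i < m, q ∈ C i := hqmem q hqI
  set a : ℕ → ℝ := fun n => dist (x n) q with haa
  have hanti : ∀ n, a (n + 1) ≤ a n := by
    intro n
    simp only [haa, hxs n]
    exact hTle q hq (x n)
  have hanti' : Antitone a := antitone_nat_of_succ_le hanti
  have habd : BddBelow (Set.range a) := ⟨0, by rintro r ⟨n, rfl⟩; exact dist_nonneg⟩
  have hLa : Tendsto a atTop (nhds (⨅ n, a n)) := tendsto_atTop_ciInf hanti' habd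
  set L := ⨅ n, a n with hL
  have hLa' : Tendsto (fun n => a (n + 1)) atTop (nhds L) :=
    hLa.comp (tendsto_add_atTop_nat 1)
  have hdiff : Tendsto (fun n => a n ^ 2 - a (n + 1) ^ 2) atTop (nhds 0) := by
    have := (hLa.pow 2).sub (hLa'.pow 2)
    simpa using this
  have hsqrt : Tendsto (fun n => Real.sqrt (a n ^ 2 - a (n + 1) ^ 2)) atTop (nhds 0) := by
    have := (Real.continuous_sqrt.tendsto 0).comp hdiff
    simpa [Function.comp_def] using this
  -- gaps tend to zero
  have hzero : ∀ i ≤ m, Tendsto (fun n => dist (x n) (compUpTo P i (x n))) atTop (nhds 0) := by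
    intro i him
    apply squeeze_zero (fun n => dist_nonneg)
      (g := fun n => (m : ℝ) * Real.sqrt (a n ^ 2 - a (n + 1) ^ 2))
    · intro n
      have hb := hmid q hq (x n) i him
      have : dist (x n) q ^ 2 - dist (T (x n)) q ^ 2 = a n ^ 2 - a (n + 1) ^ 2 := by
        simp only [haa, hxs n]
      rw [this] at hb
      refine hb.trans ?_
      have : (i : ℝ) ≤ (m : ℝ) := by exact_mod_cast him
      exact mul_le_mul_of_nonneg_right this (Real.sqrt_nonneg _)
    · simpa using hsqrt.const_mul (m : ℝ)
  -- compactness: subsequence of (x (k+1)) converging in C (m-1)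
  have hmm : m - 1 + 1 = m := Nat.succ_pred_eq_of_pos hm
  have hmem1 : ∀ k, x (k + 1) ∈ C (m - 1) := by
    intro k
    rw [hxs k]
    have h := hsucc (m - 1) (x k)
    rw [hmm] at h
    rw [hT, h]
    exact (hP (m - 1) (by omega) _).1
  obtain ⟨z, hzC, φ, hφ, hφt⟩ := hcpt.tendsto_subseq hmem1
  -- z belongs to every C i
  have hφ1 : Tendsto (fun k => φ k + 1) atTop atTop :=
    (tendsto_add_atTop_nat 1).comp hφ.tendsto_atTop
  have hz : ∀ i < m, z ∈ C i := by
    intro i hi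
    have hv : Tendsto (fun k => compUpTo P (i + 1) (x (φ k + 1))) atTop (nhds z) := by
      have hd : Tendsto (fun k => dist (compUpTo P (i + 1) (x (φ k + 1))) z) atTop (nhds 0) := by
        apply squeeze_zero (fun k => dist_nonneg)
          (g := fun k => dist (x (φ k + 1)) (compUpTo P (i + 1) (x (φ k + 1))) +
            dist (x (φ k + 1)) z)
        · intro k
          calc dist (compUpTo P (i + 1) (x (φ k + 1))) z
              ≤ dist (compUpTo P (i + 1) (x (φ k + 1))) (x (φ k + 1)) + dist (x (φ k + 1)) z :=
                dist_triangle _ _ _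
            _ = _ := by rw [dist_comm (compUpTo P (i + 1) (x (φ k + 1)))]
        · have h1 : Tendsto (fun k => dist (x (φ k + 1)) (compUpTo P (i + 1) (x (φ k + 1))))
              atTop (nhds 0) := (hzero (i + 1) hi).comp hφ1
          have h2 : Tendsto (fun k => dist (x (φ k + 1)) z) atTop (nhds 0) := by
            have := (tendsto_iff_dist_tendsto_zero).1 hφt
            simpa [Function.comp] using this
          simpa using h1.add h2
      exact tendsto_iff_dist_tendsto_zero.2 hd
    have hvm : ∀ k, compUpTo P (i + 1) (x (φ k + 1)) ∈ C i := by
      intro k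
      rw [hsucc]
      exact (hP i hi _).1
    exact (hcl i hi).mem_of_tendsto hv (Eventually.of_forall hvm)
  have hzI : z ∈ ⋂ i ∈ Finset.range m, C i := by
    simp only [Set.mem_iInter, Finset.mem_range]
    exact hz
  -- strong convergence of the whole sequence to z
  refine ⟨z, hzI, ?_⟩
  have hmono : ∀ n1 n2 : ℕ, n1 ≤ n2 → dist (x n2) z ≤ dist (x n1) z := by
    intro n1 n2 h
    induction n2, h using Nat.le_induction with
    | base => exact le_rfl
    | succ n hn ih =>
      calc dist (x (n + 1)) z = dist (T (x n)) z := by rw [hxs]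
        _ ≤ dist (x n) z := hTle z hz (x n)
        _ ≤ dist (x n1) z := ih
  rw [Metric.tendsto_atTop]
  intro ε hε
  have hdz : Tendsto (fun k => dist (x (φ k + 1)) z) atTop (nhds 0) := by
    have := (tendsto_iff_dist_tendsto_zero).1 hφt
    simpa [Function.comp] using this
  obtain ⟨K, hK⟩ := (Metric.tendsto_atTop.1 hdz) ε hε
  refine ⟨φ K + 1, fun n hn => ?_⟩
  have hKK := hK K le_rfl
  rw [Real.dist_eq, sub_zero] at hKK
  calc dist (x n) z ≤ dist (x (φ K + 1)) z := hmono _ n hn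
    _ < ε := lt_of_abs_lt hKK
end

section
/- Let X be a complete CAT(0) space, f₁, …, fₘ : X → (−∞, ∞] proper lsc convex functions with ⋂ᵢ argmin fᵢ ≠ ∅, and λ₁, …, λₘ > 0. Then for any x₀ ∈ X the iterates xₙ := (R_{λₘ,fₘ} ∘ ⋯ ∘ R_{λ₁,f₁})ⁿ(x₀) Δ-converge to a point x* ∈ argmin (f₁ + ⋯ + fₘ). -/
open Filter Metric

variable {X : Type*} [MetricSpace X]

section Auxiliary

variable {X : Type*} [MetricSpace X]

/-- The midpoint/CN part of the Hadamard property. -/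
def MidProp (X : Type*) [MetricSpace X] : Prop :=
  ∀ x y : X, ∃ m : X, dist x m = dist x y / 2 ∧ dist y m = dist x y / 2 ∧
      ∀ z : X, dist z m ^ 2 ≤ (dist z x ^ 2 + dist z y ^ 2) / 2 - dist x y ^ 2 / 4

/-- Squared asymptotic radius function. -/
noncomputable def Lam (w : ℕ → X) (y : X) : ℝ := limsup (fun n => dist y (w n) ^ 2) atTop

/-- Bounded sequence. -/
def BddSeq (w : ℕ → X) : Prop := ∃ C, ∀ n, dist (w 0) (w n) ≤ C

section LimsupHelpers
variable {u v : ℕ → ℝ}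

variable {u v : ℕ → ℝ}

lemma aux_bdd {C : ℝ} (h : ∀ n, u n ≤ C) : IsBoundedUnder (· ≤ ·) atTop u :=
  ⟨C, eventually_map.2 (Eventually.of_forall h)⟩

lemma aux_bddge {c : ℝ} (h : ∀ n, c ≤ u n) : IsBoundedUnder (· ≥ ·) atTop u :=
  ⟨c, eventually_map.2 (Eventually.of_forall h)⟩

lemma aux_cobdd {c : ℝ} (h : ∀ n, c ≤ u n) : IsCoboundedUnder (· ≤ ·) atTop u :=
  IsBoundedUnder.isCoboundedUnder_le (aux_bddge h)

lemma aux_limsup_nonneg (h0 : ∀ n, 0 ≤ u n) (hC : ∃ C, ∀ n, u n ≤ C) :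
    0 ≤ limsup u atTop := by
  obtain ⟨C, hC⟩ := hC
  exact le_limsup_of_frequently_le ((Eventually.of_forall h0).frequently) (aux_bdd hC)

lemma aux_limsup_sqrt (h0 : ∀ n, 0 ≤ u n) (hC : ∃ C, ∀ n, u n ≤ C) :
    limsup u atTop = Real.sqrt (limsup (fun n => u n ^ 2) atTop) := by
  obtain ⟨C, hC⟩ := hC
  have h1 : IsBoundedUnder (· ≤ ·) atTop (fun n => u n ^ 2) :=
    aux_bdd (C := C ^ 2) fun n => by nlinarith [h0 n, hC n]
  have h2 : IsCoboundedUnder (· ≤ ·) atTop (fun n => u n ^ 2) :=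
    aux_cobdd (c := 0) fun n => sq_nonneg _
  have hmono : Monotone Real.sqrt := fun a b hab => Real.sqrt_le_sqrt hab
  have := hmono.map_limsup_of_continuousAt (F := atTop)
    (fun n => u n ^ 2) (Real.continuous_sqrt.continuousAt) h1 h2
  rw [this]
  congr 1
  funext n
  simp [Real.sqrt_sq (h0 n)]

lemma aux_limsup_mono (h : ∀ n, u n ≤ v n) (h0 : ∀ n, 0 ≤ u n) (hC : ∃ C, ∀ n, v n ≤ C) :
    limsup u atTop ≤ limsup v atTop := by
  obtain ⟨C, hC⟩ := hC
  exact limsup_le_limsup (Eventually.of_forall h) (aux_cobdd h0) (aux_bdd hC)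


end LimsupHelpers
lemma aux_dyadic (hH : MidProp X) (u v : X) (k : ℕ) :
    ∃ w : X, dist u w = (1/2)^k * dist u v ∧ dist w v = (1 - (1/2)^k) * dist u v ∧
      ∀ z : X, dist z w ^ 2 ≤ (1 - (1/2)^k) * dist z u ^ 2 + (1/2)^k * dist z v ^ 2
        - (1/2)^k * (1 - (1/2)^k) * dist u v ^ 2 := by
  induction k with
  | zero =>
    refine ⟨v, by simp, by simp, fun z => by simp⟩
  | succ k ih =>
    obtain ⟨w, h1, h2, h3⟩ := ih
    obtain ⟨m, hm1, hm2, hm3⟩ := hH u w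
    set t : ℝ := (1/2)^k with ht
    have htk : ((1:ℝ)/2)^(k+1) = t/2 := by rw [pow_succ]; ring
    refine ⟨m, ?_, ?_, ?_⟩
    · rw [htk, hm1, h1]; ring
    · have hub : dist m v ≤ (1 - t/2) * dist u v := by
        calc dist m v ≤ dist m w + dist w v := dist_triangle _ _ _
          _ = dist u w / 2 + dist w v := by rw [dist_comm m w, hm2]
          _ = (1 - t/2) * dist u v := by rw [h1, h2]; ring
      have hlb : (1 - t/2) * dist u v ≤ dist m v := by
        have := dist_triangle u m v
        have hum : dist u m = t/2 * dist u v := by rw [hm1, h1]; ring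
        linarith
      rw [htk]; linarith
    · intro z
      have hcn := hm3 z
      have hin := h3 z
      have huw : dist u w = t * dist u v := h1
      rw [htk]
      rw [dist_comm z u, dist_comm z v] at *
      have huw2 : dist u w ^ 2 = t ^ 2 * dist u v ^ 2 := by rw [huw]; ring
      linarith [hcn, hin]


section Res
variable {f : X → EReal} {lam : ℝ} {R : X → X}

/-- finiteness of values of the resolvent -/
lemma aux_finite (hlam : 0 < lam) (hR : IsResolvent f lam R)
    (hbot : ∀ x, f x ≠ ⊥) {p : X} (hp : ∀ y, f p ≤ f y) (hptop : f p ≠ ⊤) (x : X) :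
    ∃ F : ℝ, f (R x) = (F : EReal) := by
  have h1 : f (R x) ≤ f p + ((dist x p ^ 2 / (2 * lam) : ℝ) : EReal) := by
    have h2 := hR x p
    have h3 : f (R x) ≤ f (R x) + ((dist x (R x) ^ 2 / (2 * lam) : ℝ) : EReal) := by
      nth_rewrite 1 [← add_zero (f (R x))]
      apply add_le_add_right
      exact_mod_cast div_nonneg (sq_nonneg _) (by linarith)
    exact h3.trans h2
  obtain ⟨P, hP⟩ := (EReal.canLift.prf (f p) ⟨hptop, hbot _⟩)
  have htop : f (R x) ≠ ⊤ := by
    intro h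
    rw [h, ← hP, ← EReal.coe_add, top_le_iff] at h1
    exact (EReal.coe_ne_top _) h1
  obtain ⟨F, hF⟩ := (EReal.canLift.prf (f (R x)) ⟨htop, hbot _⟩)
  exact ⟨F, hF.symm⟩

/-- one-sided key inequality -/
lemma aux_res_key (hH : MidProp X) (hlam : 0 < lam) (hR : IsResolvent f lam R)
    (hconv : GConvexFun f) {x x' : X} {Fu Fv : ℝ}
    (hFu : f (R x) = (Fu : EReal)) (hFv : f (R x') = (Fv : EReal)) :
    Fu + (dist x (R x) ^ 2 + dist (R x) (R x') ^ 2) / (2 * lam)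
      ≤ Fv + dist x (R x') ^ 2 / (2 * lam) := by
  set u := R x
  set v := R x'
  set D := dist u v
  -- step ineq for each k ≥ 1
  have hstep : ∀ k : ℕ, Fu + (dist x u ^ 2 + (1 - (1/2)^(k+1)) * D ^ 2) / (2 * lam)
      ≤ Fv + dist x v ^ 2 / (2 * lam) := by
    intro k
    obtain ⟨w, hw1, hw2, hw3⟩ := aux_dyadic hH u v (k+1)
    set t : ℝ := (1/2)^(k+1) with htdef
    have ht0 : 0 < t := by positivity
    have ht1 : t ≤ 1 := by
      apply pow_le_one₀ <;> norm_num
    -- convexity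
    have hc := hconv u v w t ⟨le_of_lt ht0, ht1⟩ hw1 hw2
    rw [hFu, hFv, ← EReal.coe_mul, ← EReal.coe_mul, ← EReal.coe_add] at hc
    -- resolvent at x with y = w
    have hr := hR x w
    rw [hFu] at hr
    have hr2 : Fu + dist x u ^ 2 / (2 * lam)
        ≤ (1 - t) * Fu + t * Fv + dist x w ^ 2 / (2 * lam) := by
      rw [← EReal.coe_le_coe_iff, EReal.coe_add, EReal.coe_add]
      calc (Fu : EReal) + ((dist x u ^ 2 / (2 * lam) : ℝ) : EReal)
          ≤ f w + ((dist x w ^ 2 / (2 * lam) : ℝ) : EReal) := hr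
        _ ≤ (((1 - t) * Fu + t * Fv : ℝ) : EReal) + ((dist x w ^ 2 / (2 * lam) : ℝ) : EReal) :=
            add_le_add_left hc _
    have hcn : dist x w ^ 2 ≤ (1 - t) * dist x u ^ 2 + t * dist x v ^ 2
        - t * (1 - t) * D ^ 2 := hw3 x
    have hkey : t * (Fu + (dist x u ^ 2 + (1 - t) * D ^ 2) / (2 * lam))
        ≤ t * (Fv + dist x v ^ 2 / (2 * lam)) := by
      have h2lam : 0 < 2 * lam := by linarith
      have expand : t * (Fu + (dist x u ^ 2 + (1 - t) * D ^ 2) / (2 * lam))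
          - t * (Fv + dist x v ^ 2 / (2 * lam))
          = (Fu + dist x u ^ 2 / (2*lam))
            - ((1 - t) * Fu + t * Fv + ((1 - t) * dist x u ^ 2 + t * dist x v ^ 2 - t * (1-t) * D ^2) / (2 * lam)) := by
        field_simp
        ring
      have e2 : dist x w ^ 2 / (2 * lam)
          ≤ ((1 - t) * dist x u ^ 2 + t * dist x v ^ 2 - t * (1-t) * D ^2) / (2 * lam) := by
        gcongr
      linarith [hr2, expand, e2]
    exact le_of_mul_le_mul_left hkey ht0
  -- pass to the limit k → ∞
  have hlim : Tendsto (fun k : ℕ => Fu + (dist x u ^ 2 + (1 - (1/2)^(k+1)) * D ^ 2) / (2 * lam))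
      atTop (nhds (Fu + (dist x u ^ 2 + D ^ 2) / (2 * lam))) := by
    have h2 : Tendsto (fun k : ℕ => ((1:ℝ)/2)^(k+1)) atTop (nhds 0) := by
      have := tendsto_pow_atTop_nhds_zero_of_lt_one (by norm_num : (0:ℝ) ≤ 1/2) (by norm_num)
      exact (this.comp (tendsto_add_atTop_nat 1))
    have h3 : Tendsto (fun k : ℕ => (1 - (1/2)^(k+1) : ℝ)) atTop (nhds 1) := by
      simpa using (tendsto_const_nhds.sub h2)
    have h4 : Tendsto (fun k : ℕ => Fu + (dist x u ^ 2 + (1 - (1/2)^(k+1)) * D ^ 2) / (2 * lam))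
        atTop (nhds (Fu + (dist x u ^ 2 + 1 * D ^ 2) / (2 * lam))) :=
      tendsto_const_nhds.add ((tendsto_const_nhds.add (h3.mul tendsto_const_nhds)).div_const _)
    simpa using h4
  exact le_of_tendsto hlim (Eventually.of_forall hstep)


-- (†) the two-point master inequality

lemma aux_master (hH : MidProp X) (hlam : 0 < lam) (hR : IsResolvent f lam R)
    (hconv : GConvexFun f) {x x' : X} {Fu Fv : ℝ}
    (hFu : f (R x) = (Fu : EReal)) (hFv : f (R x') = (Fv : EReal)) :
    dist x (R x) ^ 2 + dist x' (R x') ^ 2 + 2 * dist (R x) (R x') ^ 2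
      ≤ dist x (R x') ^ 2 + dist x' (R x) ^ 2 := by
  have h1 := aux_res_key hH hlam hR hconv hFu hFv
  have h2 := aux_res_key hH hlam hR hconv hFv hFu
  rw [dist_comm (R x') (R x)] at h2
  have h2lam : 0 < 2 * lam := by linarith
  have key : (dist x (R x) ^ 2 + dist x' (R x') ^ 2 + 2 * dist (R x) (R x') ^ 2) / (2 * lam)
      ≤ (dist x (R x') ^ 2 + dist x' (R x) ^ 2) / (2 * lam) := by
    have e1 : (dist x (R x) ^ 2 + dist x' (R x') ^ 2 + 2 * dist (R x) (R x') ^ 2) / (2 * lam)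
        = (dist x (R x) ^ 2 + dist (R x) (R x') ^ 2) / (2 * lam)
          + (dist x' (R x') ^ 2 + dist (R x) (R x') ^ 2) / (2 * lam) := by ring
    have e2 : (dist x (R x') ^ 2 + dist x' (R x) ^ 2) / (2 * lam)
        = dist x (R x') ^ 2 / (2 * lam) + dist x' (R x) ^ 2 / (2 * lam) := by ring
    linarith
  exact (div_le_div_iff_of_pos_right h2lam).mp key

-- minimizers are fixed points
lemma aux_min_fixed (hlam : 0 < lam) (hR : IsResolvent f lam R)
    (hbot : ∀ x, f x ≠ ⊥) {p : X} (hp : ∀ y, f p ≤ f y) (hptop : f p ≠ ⊤) :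
    R p = p := by
  obtain ⟨F, hF⟩ := aux_finite hlam hR hbot hp hptop p
  obtain ⟨P, hP⟩ := EReal.canLift.prf (f p) ⟨hptop, hbot p⟩
  have h1 := hR p p
  rw [hF, ← hP, dist_self] at h1
  have hPF : P ≤ F := by
    have := hp (R p)
    rw [hF, ← hP, EReal.coe_le_coe_iff] at this
    exact this
  rw [← EReal.coe_add, ← EReal.coe_add, EReal.coe_le_coe_iff] at h1
  have hd : dist p (R p) ^ 2 / (2 * lam) ≤ 0 := by
    norm_num at h1
    linarith
  have h2lam : 0 < 2 * lam := by linarith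
  have h2 : dist p (R p) ^ 2 ≤ 0 := by
    by_contra h
    push_neg at h
    have := div_pos h h2lam
    linarith
  have h3 : dist p (R p) ^ 2 = 0 := le_antisymm h2 (sq_nonneg _)
  have : dist p (R p) = 0 := by
    have := pow_eq_zero_iff (n := 2) (by norm_num) |>.mp h3
    exact this
  rw [dist_comm] at this
  exact dist_eq_zero.mp this

-- fixed points are minimizers
lemma aux_fixed_min (hH : MidProp X) (hlam : 0 < lam) (hR : IsResolvent f lam R)
    (hconv : GConvexFun f) (hbot : ∀ x, f x ≠ ⊥) {p : X} (hp : ∀ y, f p ≤ f y)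
    (hptop : f p ≠ ⊤) {z : X} (hz : R z = z) : ∀ y, f z ≤ f y := by
  intro y
  rcases eq_or_ne (f y) ⊤ with hy | hy
  · rw [hy]; exact le_top
  obtain ⟨G, hG⟩ := EReal.canLift.prf (f y) ⟨hy, hbot y⟩
  obtain ⟨F, hF⟩ := aux_finite hlam hR hbot hp hptop z
  rw [hz] at hF
  rw [hF, ← hG, EReal.coe_le_coe_iff]
  -- for each k : F ≤ G + t * dist z y ^ 2 / (2 * lam)
  have hstep : ∀ k : ℕ, F ≤ G + (1/2)^(k+1) * dist z y ^ 2 / (2 * lam) := by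
    intro k
    obtain ⟨w, hw1, hw2, _⟩ := aux_dyadic hH z y (k+1)
    set t : ℝ := (1/2)^(k+1) with htdef
    have ht0 : 0 < t := by positivity
    have ht1 : t ≤ 1 := by apply pow_le_one₀ <;> norm_num
    have hc := hconv z y w t ⟨le_of_lt ht0, ht1⟩ hw1 hw2
    rw [hF, ← hG, ← EReal.coe_mul, ← EReal.coe_mul, ← EReal.coe_add] at hc
    have hr := hR z w
    rw [hz, hF, dist_self] at hr
    have hr2 : F + 0 ^ 2 / (2 * lam) ≤ (1 - t) * F + t * G + dist z w ^ 2 / (2 * lam) := by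
      rw [← EReal.coe_le_coe_iff, EReal.coe_add, EReal.coe_add]
      calc (F : EReal) + ((0 ^ 2 / (2 * lam) : ℝ) : EReal)
          ≤ f w + ((dist z w ^ 2 / (2 * lam) : ℝ) : EReal) := hr
        _ ≤ (((1 - t) * F + t * G : ℝ) : EReal) + ((dist z w ^ 2 / (2 * lam) : ℝ) : EReal) :=
            add_le_add_left hc _
    have hzw : dist z w ^ 2 = t ^ 2 * dist z y ^ 2 := by rw [hw1]; ring
    rw [hzw] at hr2
    have h2lam : 0 < 2 * lam := by linarith
    have hkey : t * F ≤ t * (G + t * dist z y ^ 2 / (2 * lam)) := by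
      have expand : t * F - t * (G + t * dist z y ^ 2 / (2 * lam))
          = F + 0 ^ 2 / (2 * lam) - ((1 - t) * F + t * G + t ^ 2 * dist z y ^ 2 / (2 * lam)) := by
        field_simp; ring
      linarith [hr2, expand]
    have := le_of_mul_le_mul_left hkey ht0
    calc F ≤ G + t * dist z y ^ 2 / (2 * lam) := this
      _ = G + t * dist z y ^ 2 / (2 * lam) := rfl
  -- limit
  have hlim : Tendsto (fun k : ℕ => G + (1/2)^(k+1) * dist z y ^ 2 / (2 * lam)) atTop
      (nhds (G + 0 * dist z y ^ 2 / (2 * lam))) := by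
    have h2 : Tendsto (fun k : ℕ => ((1:ℝ)/2)^(k+1)) atTop (nhds 0) :=
      (tendsto_pow_atTop_nhds_zero_of_lt_one (by norm_num) (by norm_num)).comp
        (tendsto_add_atTop_nat 1)
    exact tendsto_const_nhds.add ((h2.mul tendsto_const_nhds).div_const _)
  have := ge_of_tendsto hlim (Eventually.of_forall hstep)
  simpa using this

-- (★) the firm quasi-nonexpansiveness
lemma aux_firm (hH : MidProp X) (hlam : 0 < lam) (hR : IsResolvent f lam R)
    (hconv : GConvexFun f) (hbot : ∀ x, f x ≠ ⊥) {p : X} (hp : ∀ y, f p ≤ f y)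
    (hptop : f p ≠ ⊤) {q : X} (hq : R q = q) (x : X) :
    dist x (R x) ^ 2 + dist (R x) q ^ 2 ≤ dist x q ^ 2 := by
  obtain ⟨Fu, hFu⟩ := aux_finite hlam hR hbot hp hptop x
  obtain ⟨Fv, hFv⟩ := aux_finite hlam hR hbot hp hptop q
  have := aux_master hH hlam hR hconv hFu hFv
  rw [hq] at this
  rw [dist_self] at this
  rw [dist_comm q (R x)] at this
  nlinarith [this]

end Res

section Center
variable {w : ℕ → X}


lemma BddSeq.distbdd (hb : BddSeq w) (y : X) : ∃ C, ∀ n, dist y (w n) ≤ C := by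
  obtain ⟨C, hC⟩ := hb
  exact ⟨dist y (w 0) + C, fun n => (dist_triangle y (w 0) (w n)).trans (by linarith [hC n])⟩

lemma BddSeq.sqbdd (hb : BddSeq w) (y : X) : ∃ C, ∀ n, dist y (w n) ^ 2 ≤ C := by
  obtain ⟨C, hC⟩ := hb.distbdd y
  exact ⟨C ^ 2, fun n => by nlinarith [hC n, dist_nonneg (x := y) (y := w n)]⟩

lemma lam_nonneg (hb : BddSeq w) (y : X) : 0 ≤ Lam w y :=
  aux_limsup_nonneg (fun n => sq_nonneg _) (hb.sqbdd y)

/-- `limsup (u n)` vs `(a n + b n)/2 - c` combo bound -/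
lemma aux_limsup_combo {u a b : ℕ → ℝ} {c : ℝ} (h : ∀ n, u n ≤ (a n + b n) / 2 - c)
    (hu0 : ∀ n, 0 ≤ u n) (ha : ∃ C, ∀ n, a n ≤ C) (hb : ∃ C, ∀ n, b n ≤ C) :
    limsup u atTop ≤ (limsup a atTop + limsup b atTop) / 2 - c := by
  obtain ⟨Ca, hCa⟩ := ha
  obtain ⟨Cb, hCb⟩ := hb
  apply le_of_forall_pos_le_add
  intro ε hε
  have ha' : ∀ᶠ n in atTop, a n < limsup a atTop + ε :=
    eventually_lt_of_limsup_lt (lt_add_of_pos_right _ hε) (aux_bdd hCa)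
  have hb' : ∀ᶠ n in atTop, b n < limsup b atTop + ε :=
    eventually_lt_of_limsup_lt (lt_add_of_pos_right _ hε) (aux_bdd hCb)
  have hev : ∀ᶠ n in atTop, u n ≤ (limsup a atTop + limsup b atTop) / 2 - c + ε := by
    filter_upwards [ha', hb'] with n h1 h2
    have := h n
    linarith
  exact limsup_le_of_le (aux_cobdd hu0) hev

lemma aux_limsup_le_of_small {u a s : ℕ → ℝ} (h : ∀ n, u n ≤ a n + s n)
    (hs : Tendsto s atTop (nhds 0)) (hu0 : ∀ n, 0 ≤ u n) (ha : ∃ C, ∀ n, a n ≤ C) :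
    limsup u atTop ≤ limsup a atTop := by
  obtain ⟨Ca, hCa⟩ := ha
  apply le_of_forall_pos_le_add
  intro ε hε
  have ha' : ∀ᶠ n in atTop, a n < limsup a atTop + ε / 2 :=
    eventually_lt_of_limsup_lt (lt_add_of_pos_right _ (by linarith)) (aux_bdd hCa)
  have hs' : ∀ᶠ n in atTop, s n < ε / 2 := by
    have := hs.eventually (eventually_lt_nhds (by linarith : (0:ℝ) < ε / 2))
    simpa using this
  have hev : ∀ᶠ n in atTop, u n ≤ limsup a atTop + ε := by
    filter_upwards [ha', hs'] with n h1 h2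
    have := h n
    linarith
  exact limsup_le_of_le (aux_cobdd hu0) hev

/-- CN inequality for Lam at the midpoint -/
lemma lam_midpoint (hH : MidProp X) (hb : BddSeq w) {y y' m : X}
    (hm : dist y m = dist y y' / 2 ∧ dist y' m = dist y y' / 2 ∧
      ∀ z : X, dist z m ^ 2 ≤ (dist z y ^ 2 + dist z y' ^ 2) / 2 - dist y y' ^ 2 / 4) :
    Lam w m ≤ (Lam w y + Lam w y') / 2 - dist y y' ^ 2 / 4 := by
  apply aux_limsup_combo
  · intro n
    have := hm.2.2 (w n)
    rw [dist_comm (w n) m, dist_comm (w n) y, dist_comm (w n) y'] at this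
    exact this
  · exact fun n => sq_nonneg _
  · exact hb.sqbdd y
  · exact hb.sqbdd y'

/-- quantitative minimality -/
lemma aux_center_quant (hH : MidProp X) (hb : BddSeq w) {z : X}
    (hz : ∀ y, Lam w z ≤ Lam w y) (y : X) :
    Lam w z + dist z y ^ 2 / 2 ≤ Lam w y := by
  obtain ⟨m, hm1, hm2, hm3⟩ := hH z y
  have h1 := lam_midpoint hH hb (y := z) (y' := y) ⟨hm1, hm2, hm3⟩
  have h2 := hz m
  linarith

/-- existence of the asymptotic center (squared form) -/
lemma aux_center_exists (hH : MidProp X) (hcomp : CompleteSpace X) (hb : BddSeq w) :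
    ∃ z : X, ∀ y : X, Lam w z ≤ Lam w y := by
  haveI := hcomp
  haveI : Nonempty X := ⟨w 0⟩
  have hbdd : BddBelow (Set.range (Lam w)) := ⟨0, by rintro _ ⟨y, rfl⟩; exact lam_nonneg hb y⟩
  set I := ⨅ y, Lam w y with hI
  have hIle : ∀ y, I ≤ Lam w y := fun y => ciInf_le hbdd y
  -- minimizing sequence
  have hsel : ∀ k : ℕ, ∃ y : X, Lam w y < I + 1 / (k + 1) := by
    intro k
    apply exists_lt_of_ciInf_lt
    rw [← hI]
    have : (0:ℝ) < 1 / (k+1) := by positivity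
    linarith
  choose y hy using hsel
  -- Cauchy
  have hdist : ∀ j k : ℕ, dist (y j) (y k) ^ 2 ≤ 2 * (1/(j+1) + 1/(k+1)) := by
    intro j k
    obtain ⟨m, hm1, hm2, hm3⟩ := hH (y j) (y k)
    have h1 := lam_midpoint hH hb (y := y j) (y' := y k) ⟨hm1, hm2, hm3⟩
    have h2 := hIle m
    have h3 := hy j
    have h4 := hy k
    linarith
  have hcauchy : CauchySeq y := by
    rw [Metric.cauchySeq_iff]
    intro ε hε
    obtain ⟨N, hN⟩ := exists_nat_gt (8 / ε ^ 2)
    refine ⟨N, fun j hj k hk => ?_⟩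
    have hj1 : (1:ℝ)/(j+1) ≤ 1/(N+1) := by
      apply div_le_div_of_nonneg_left (by norm_num) (by positivity)
      exact_mod_cast by exact_mod_cast add_le_add_left (Nat.cast_le.mpr hj) 1
    have hk1 : (1:ℝ)/(k+1) ≤ 1/(N+1) := by
      apply div_le_div_of_nonneg_left (by norm_num) (by positivity)
      exact_mod_cast by exact_mod_cast add_le_add_left (Nat.cast_le.mpr hk) 1
    have h8 : (0:ℝ) < 8 / ε ^2 := by positivity
    have hε2 : (0:ℝ) < ε ^ 2 := by positivity
    have hNpos : (0:ℝ) < N := lt_trans h8 hN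
    have hN1 : (1:ℝ)/(N+1) < ε^2/8 := by
      rw [div_lt_div_iff₀ (by positivity) (by norm_num)]
      rw [div_lt_iff₀ (by positivity : (0:ℝ) < ε^2)] at hN
      linarith
    have := hdist j k
    have hsq : dist (y j) (y k) ^ 2 < ε ^ 2 := by
      calc dist (y j) (y k) ^ 2 ≤ 2 * (1/(j+1) + 1/(k+1)) := this
        _ ≤ 2 * (1/(N+1) + 1/(N+1)) := by linarith
        _ < ε ^ 2 := by linarith
    have hd0 : (0:ℝ) ≤ dist (y j) (y k) := dist_nonneg
    nlinarith [hsq, hd0, hε]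
  obtain ⟨z, hz⟩ := cauchySeq_tendsto_of_complete hcauchy
  refine ⟨z, fun y' => ?_⟩
  -- Lam w z ≤ I suffices
  suffices h : Lam w z ≤ I from h.trans (hIle y')
  -- for each k
  obtain ⟨C0, hC0⟩ := id hb
  have hk : ∀ k : ℕ, Lam w z ≤ I + 1/(k+1)
      + (2 * dist z (y k) * (dist z (y k) + dist z (w 0) + C0) + dist z (y k) ^ 2) := by
    intro k
    set d := dist z (y k)
    have hpt : ∀ n, dist z (w n) ^ 2 ≤ dist (y k) (w n) ^ 2
        + (2 * d * (d + dist z (w 0) + C0) + d ^ 2) := by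
      intro n
      have h1 : dist z (w n) ≤ d + dist (y k) (w n) := dist_triangle z (y k) (w n)
      have h2 : dist (y k) (w n) ≤ d + dist z (w 0) + C0 := by
        have := dist_triangle (y k) z (w n)
        have := dist_triangle z (w 0) (w n)
        have := hC0 n
        rw [dist_comm (y k) z] at *
        linarith
      nlinarith [dist_nonneg (x := z) (y := w n), dist_nonneg (x := y k) (y := w n),
        dist_nonneg (x := z) (y := y k)]
    have hmono : Lam w z ≤ limsup (fun n => dist (y k) (w n) ^ 2
        + (2 * d * (d + dist z (w 0) + C0) + d ^ 2)) atTop := by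
      apply aux_limsup_mono hpt (fun n => sq_nonneg _)
      obtain ⟨C, hC⟩ := hb.sqbdd (y k)
      exact ⟨C + (2 * d * (d + dist z (w 0) + C0) + d ^ 2), fun n => by linarith [hC n]⟩
    rw [limsup_add_const atTop (fun n => dist (y k) (w n) ^ 2)
      (2 * d * (d + dist z (w 0) + C0) + d ^ 2) (aux_bdd (hb.sqbdd (y k)).choose_spec)
      (aux_cobdd (fun n => sq_nonneg _))] at hmono
    calc Lam w z ≤ Lam w (y k) + (2 * d * (d + dist z (w 0) + C0) + d ^ 2) := hmono
      _ ≤ I + 1/(k+1) + (2 * d * (d + dist z (w 0) + C0) + d ^ 2) := by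
          linarith [le_of_lt (hy k)]
  -- limit
  have hdtend : Tendsto (fun k => dist z (y k)) atTop (nhds 0) := by
    have := hz
    rw [tendsto_iff_dist_tendsto_zero] at this
    simpa [dist_comm] using this
  have htend : Tendsto (fun k : ℕ => I + 1/(k+1)
      + (2 * dist z (y k) * (dist z (y k) + dist z (w 0) + C0) + dist z (y k) ^ 2)) atTop
      (nhds (I + 0 + (2 * 0 * (0 + dist z (w 0) + C0) + 0 ^ 2))) := by
    apply Tendsto.add
    · apply Tendsto.add tendsto_const_nhds
      exact tendsto_one_div_add_atTop_nhds_zero_nat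
    · apply Tendsto.add
      · exact (tendsto_const_nhds.mul hdtend |>.mul
          ((hdtend.add tendsto_const_nhds).add tendsto_const_nhds))
      · simpa using hdtend.pow 2
  have := ge_of_tendsto htend (Eventually.of_forall hk)
  simpa using this


end Center

-- bridge: AsympCenter vs squared minimality

lemma aux_center_iff {w : ℕ → X} (hb : BddSeq w) (z : X) :
    AsympCenter w z ↔ ∀ y, Lam w z ≤ Lam w y := by
  have hs : ∀ y : X, limsup (fun n => dist y (w n)) atTop = Real.sqrt (Lam w y) := fun y =>
    aux_limsup_sqrt (fun n => dist_nonneg) (hb.distbdd y)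
  constructor
  · intro h y
    have := h y
    rw [hs z, hs y] at this
    have h1 := lam_nonneg hb z
    have h2 := lam_nonneg hb y
    nlinarith [Real.sq_sqrt h1, Real.sq_sqrt h2, Real.sqrt_nonneg (Lam w z),
      Real.sqrt_nonneg (Lam w y)]
  · intro h y
    rw [hs z, hs y]
    exact Real.sqrt_le_sqrt (h y)

-- equal Lam for asymptotically equal sequences
lemma aux_lam_eq {u v : ℕ → X} (hu : BddSeq u)
    (ht : Tendsto (fun n => dist (u n) (v n)) atTop (nhds 0)) (y : X) :
    Lam u y = Lam v y := by
  obtain ⟨Cu, hCu⟩ := hu.distbdd y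
  have hCu0 : ∀ n, 0 ≤ Cu := fun n => le_trans dist_nonneg (hCu n)
  have hv : ∀ n, dist y (v n) ≤ dist y (u n) + dist (u n) (v n) := fun n =>
    dist_triangle _ _ _
  have hvb : ∃ C, ∀ n, dist y (v n) ≤ C := by
    obtain ⟨D, hD⟩ := Filter.Tendsto.bddAbove_range ht
    refine ⟨Cu + D, fun n => ?_⟩
    have h1 := hv n
    have h2 : dist (u n) (v n) ≤ D := hD ⟨n, rfl⟩
    linarith [hCu n]
  obtain ⟨Cv, hCv⟩ := hvb
  apply le_antisymm
  · apply aux_limsup_le_of_small (s := fun n => dist (u n) (v n) * (2 * Cv + dist (u n) (v n)))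
    · intro n
      have h1 : dist y (u n) ≤ dist y (v n) + dist (u n) (v n) := by
        have := dist_triangle y (v n) (u n)
        rw [dist_comm (v n) (u n)] at this
        linarith
      have h2 := hCv n
      nlinarith [dist_nonneg (x := y) (y := u n), dist_nonneg (x := u n) (y := v n),
        dist_nonneg (x := y) (y := v n)]
    · have : Tendsto (fun n => dist (u n) (v n) * (2 * Cv + dist (u n) (v n))) atTop
          (nhds (0 * (2 * Cv + 0))) := ht.mul (tendsto_const_nhds.add ht)
      simpa using this
    · exact fun n => sq_nonneg _
    · exact ⟨Cv ^ 2, fun n => by nlinarith [hCv n, dist_nonneg (x := y) (y := v n)]⟩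
  · apply aux_limsup_le_of_small (s := fun n => dist (u n) (v n) * (2 * Cu + dist (u n) (v n)))
    · intro n
      have h1 := hv n
      have h2 := hCu n
      nlinarith [dist_nonneg (x := y) (y := u n), dist_nonneg (x := u n) (y := v n),
        dist_nonneg (x := y) (y := v n)]
    · have : Tendsto (fun n => dist (u n) (v n) * (2 * Cu + dist (u n) (v n))) atTop
          (nhds (0 * (2 * Cu + 0))) := ht.mul (tendsto_const_nhds.add ht)
      simpa using this
    · exact fun n => sq_nonneg _
    · exact hu.sqbdd y

-- limsup of convergent sequence helper
lemma aux_limsup_of_tendsto {u : ℕ → ℝ} {L : ℝ} (h : Tendsto u atTop (nhds L)) :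
    limsup u atTop = L := h.limsup_eq

-- Δ-demiclosedness of the resolvent, via the asymptotic center
lemma aux_demiclosed {f : X → EReal} {lam : ℝ} {R : X → X} (hH : MidProp X) (hlam : 0 < lam)
    (hR : IsResolvent f lam R) (hconv : GConvexFun f) (hbot : ∀ x, f x ≠ ⊥) {p : X}
    (hp : ∀ y, f p ≤ f y) (hptop : f p ≠ ⊤) {v : ℕ → X} (hb : BddSeq v) {c : X}
    (hc : ∀ y, Lam v c ≤ Lam v y)
    (he : Tendsto (fun n => dist (v n) (R (v n))) atTop (nhds 0)) : R c = c := by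
  obtain ⟨Fc, hFc⟩ := aux_finite hlam hR hbot hp hptop c
  choose Fn hFn using fun n => aux_finite hlam hR hbot hp hptop (v n)
  set d := dist c (R c) with hd
  obtain ⟨Cb, hCb⟩ := hb.distbdd c
  obtain ⟨Cg, hCg⟩ := hb.distbdd (R c)
  -- pointwise inequality
  have hpt : ∀ n, dist (R c) (v n) ^ 2 + d ^ 2 ≤ dist c (v n) ^ 2
      + dist (v n) (R (v n)) * (2 * Cb + 4 * Cg + dist (v n) (R (v n))) := by
    intro n
    have hm := aux_master hH hlam hR hconv hFc (hFn n)
    set e := dist (v n) (R (v n)) with hedef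
    set g := dist (R c) (v n) with hgdef
    set b := dist c (v n) with hbdef
    set a := dist (R c) (R (v n)) with hadef
    have tri1 : g ≤ a + e := by
      have := dist_triangle (R c) (R (v n)) (v n)
      rw [dist_comm (R (v n)) (v n)] at this
      linarith
    have ha2 : g ^ 2 - 2 * e * g ≤ a ^ 2 := by
      rcases le_or_gt e g with hle | hlt
      · nlinarith [tri1]
      · nlinarith [dist_nonneg (x := R c) (y := R (v n)), dist_nonneg (x := R c) (y := v n)]
    have tri2 : dist c (R (v n)) ≤ b + e := dist_triangle c (v n) (R (v n))
    have hcv : dist c (R (v n)) ^ 2 ≤ (b + e) ^ 2 := by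
      nlinarith [dist_nonneg (x := c) (y := R (v n)), tri2,
        dist_nonneg (x := c) (y := v n), dist_nonneg (x := v n) (y := R (v n))]
    have hvRc : dist (v n) (R c) = g := dist_comm (v n) (R c)
    rw [hvRc] at hm
    have hb' := hCb n
    have hg' := hCg n
    have he' : 0 ≤ e := dist_nonneg
    nlinarith [hm, ha2, hcv]
  -- limsup
  have hsm : Tendsto (fun n => dist (v n) (R (v n)) * (2 * Cb + 4 * Cg + dist (v n) (R (v n))))
      atTop (nhds (0 * (2 * Cb + 4 * Cg + 0))) := he.mul (tendsto_const_nhds.add he)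
  have hlim : limsup (fun n => dist (R c) (v n) ^ 2 + d ^ 2) atTop
      ≤ limsup (fun n => dist c (v n) ^ 2) atTop := by
    apply aux_limsup_le_of_small hpt (by simpa using hsm)
      (fun n => by positivity)
    exact hb.sqbdd c
  have hconst : limsup (fun n => dist (R c) (v n) ^ 2 + d ^ 2) atTop
      = Lam v (R c) + d ^ 2 := by
    exact limsup_add_const atTop (fun n => dist (R c) (v n) ^ 2) (d ^ 2)
      (aux_bdd (hb.sqbdd (R c)).choose_spec) (aux_cobdd (fun n => sq_nonneg _))
  rw [hconst] at hlim
  have : Lam v (R c) + d ^ 2 ≤ Lam v (R c) := le_trans hlim (hc (R c))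
  have hd0 : d = 0 := by nlinarith [sq_nonneg d]
  rw [hd] at hd0
  have := dist_eq_zero.mp hd0
  exact this.symm

lemma aux_sqle {a b : ℝ} (ha : 0 ≤ a) (hb : 0 ≤ b) (h : a ^ 2 ≤ b ^ 2) : a ≤ b := by
  nlinarith

lemma aux_tendsto_of_sq {a : ℕ → ℝ} (h0 : ∀ n, 0 ≤ a n)
    (h : Tendsto (fun n => a n ^ 2) atTop (nhds 0)) : Tendsto a atTop (nhds 0) := by
  have h1 : Tendsto (fun n => Real.sqrt (a n ^ 2)) atTop (nhds (Real.sqrt 0)) :=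
    (Real.continuous_sqrt.tendsto 0).comp h
  have h2 : (fun n => Real.sqrt (a n ^ 2)) = a := funext fun n => by
    rw [Real.sqrt_sq (h0 n)]
  rw [h2] at h1
  simpa using h1


end Auxiliary

theorem stmt16 {X : Type*} [MetricSpace X] (hX : IsHadamard X)
    (m : ℕ) (f : ℕ → X → EReal)
    (hproper : ∀ i < m, ∃ x, f i x ≠ ⊤) (hbot : ∀ i < m, ∀ x, f i x ≠ ⊥)
    (hlsc : ∀ i < m, LowerSemicontinuous (f i)) (hconv : ∀ i < m, GConvexFun (f i))
    (hmin : (⋂ i ∈ Finset.range m, argminSet (f i)).Nonempty)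
    (lam : ℕ → ℝ) (hlam : ∀ i < m, 0 < lam i)
    (R : ℕ → X → X) (hR : ∀ i < m, IsResolvent (f i) (lam i) (R i))
    (x₀ : X) :
    ∃ z : X, z ∈ argminSet (fun x => ∑ i ∈ Finset.range m, f i x) ∧
      DeltaConv (fun n : ℕ => (compUpTo R m)^[n] x₀) z := by
  obtain ⟨hcomp, hmid⟩ := hX
  haveI := hcomp
  have hmid' : MidProp X := hmid
  obtain ⟨p, hpmem⟩ := hmin
  have hp : ∀ i, i < m → ∀ y, f i p ≤ f i y := by
    intro i hi y
    simp only [Set.mem_iInter] at hpmem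
    exact hpmem i (Finset.mem_range.mpr hi) y
  have hptop : ∀ i, i < m → f i p ≠ ⊤ := by
    intro i hi
    obtain ⟨x0, hx0⟩ := hproper i hi
    intro h
    exact hx0 (top_le_iff.mp (h ▸ hp i hi x0))
  have hfix : ∀ i, i < m → R i p = p := fun i hi =>
    aux_min_fixed (hlam i hi) (hR i hi) (hbot i hi) (hp i hi) (hptop i hi)
  set T := compUpTo R m with hT
  set x : ℕ → X := fun n => T^[n] x₀ with hxdef
  -- stage inequality
  have hstage : ∀ q : X, (∀ i, i < m → R i q = q) → ∀ j, j ≤ m → ∀ w : X,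
      dist (compUpTo R j w) q ^ 2
        + ∑ i ∈ Finset.range j, dist (compUpTo R i w) (compUpTo R (i+1) w) ^ 2
      ≤ dist w q ^ 2 := by
    intro q hq j
    induction j with
    | zero => intro _ w; simp [compUpTo]
    | succ j ih =>
      intro hj w
      have hj' : j < m := hj
      have ihw := ih (le_of_lt hj') w
      have hfirm := aux_firm hmid' (hlam j hj') (hR j hj') (hconv j hj') (hbot j hj')
        (hp j hj') (hptop j hj') (hq j hj') (compUpTo R j w)
      have hco : compUpTo R (j+1) w = R j (compUpTo R j w) := rfl
      rw [Finset.sum_range_succ, hco]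
      linarith
  -- Fejer monotonicity for any common fixed point
  have hfej : ∀ q : X, (∀ i, i < m → R i q = q) → ∀ w, dist (T w) q ≤ dist w q := by
    intro q hq w
    have h1 := hstage q hq m le_rfl w
    have h2 : (0:ℝ) ≤ ∑ i ∈ Finset.range m,
        dist (compUpTo R i w) (compUpTo R (i+1) w) ^ 2 :=
      Finset.sum_nonneg fun i _ => sq_nonneg _
    exact aux_sqle dist_nonneg dist_nonneg (by rw [hT]; linarith)
  have hxs : ∀ n, x (n+1) = T (x n) := fun n => Function.iterate_succ_apply' T n x₀
  have hx0 : x 0 = x₀ := rfl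
  have hmono : ∀ q : X, (∀ i, i < m → R i q = q) →
      Antitone (fun n => dist (x n) q) := by
    intro q hq
    apply antitone_nat_of_succ_le
    intro n
    rw [hxs n]
    exact hfej q hq (x n)
  have hlimq : ∀ q : X, (∀ i, i < m → R i q = q) →
      ∃ L : ℝ, Tendsto (fun n => dist (x n) q) atTop (nhds L) := by
    intro q hq
    refine ⟨⨅ n, dist (x n) q, tendsto_atTop_ciInf (hmono q hq) ⟨0, ?_⟩⟩
    rintro _ ⟨n, rfl⟩
    exact dist_nonneg
  have hdle : ∀ q : X, (∀ i, i < m → R i q = q) → ∀ k, dist (x k) q ≤ dist x₀ q := by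
    intro q hq k
    have := hmono q hq (Nat.zero_le k)
    simpa [hx0] using this
  -- stage points stay close to q = p in distance
  have hstageP : ∀ j, j ≤ m → ∀ w : X, dist (compUpTo R j w) p ≤ dist w p := by
    intro j hj w
    have h1 := hstage p hfix j hj w
    have h2 : (0:ℝ) ≤ ∑ i ∈ Finset.range j,
        dist (compUpTo R i w) (compUpTo R (i+1) w) ^ 2 :=
      Finset.sum_nonneg fun i _ => sq_nonneg _
    exact aux_sqle dist_nonneg dist_nonneg (by linarith)
  have hbddx : BddSeq x := by
    refine ⟨2 * dist x₀ p, fun n => ?_⟩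
    have h1 := hdle p hfix n
    have h2 := dist_triangle (x 0) p (x n)
    rw [hx0] at *
    rw [dist_comm p (x n)] at h2
    linarith
  -- sum of squared increments vanishes
  obtain ⟨Lp, hLp⟩ := hlimq p hfix
  have hsum : ∀ n, ∑ i ∈ Finset.range m,
      dist (compUpTo R i (x n)) (compUpTo R (i+1) (x n)) ^ 2
      ≤ dist (x n) p ^ 2 - dist (x (n+1)) p ^ 2 := by
    intro n
    have h1 := hstage p hfix m le_rfl (x n)
    have h2 : compUpTo R m (x n) = x (n+1) := by rw [hxs n, hT]
    rw [h2] at h1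
    linarith
  have hDto : ∀ i, i < m → Tendsto
      (fun n => dist (compUpTo R i (x n)) (compUpTo R (i+1) (x n))) atTop (nhds 0) := by
    intro i hi
    apply aux_tendsto_of_sq (fun n => dist_nonneg)
    have hg : Tendsto (fun n => dist (x n) p ^ 2 - dist (x (n+1)) p ^ 2) atTop (nhds 0) := by
      have a1 : Tendsto (fun n => dist (x n) p ^ 2) atTop (nhds (Lp ^ 2)) := hLp.pow 2
      have a2 : Tendsto (fun n => dist (x (n+1)) p ^ 2) atTop (nhds (Lp ^ 2)) :=
        a1.comp (tendsto_add_atTop_nat 1)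
      simpa using a1.sub a2
    refine squeeze_zero (fun n => sq_nonneg _) (fun n => ?_) hg
    calc dist (compUpTo R i (x n)) (compUpTo R (i+1) (x n)) ^ 2
        ≤ ∑ j ∈ Finset.range m, dist (compUpTo R j (x n)) (compUpTo R (j+1) (x n)) ^ 2 :=
          Finset.single_le_sum
            (f := fun j => dist (compUpTo R j (x n)) (compUpTo R (j+1) (x n)) ^ 2)
            (fun j _ => sq_nonneg _) (Finset.mem_range.mpr hi)
      _ ≤ dist (x n) p ^ 2 - dist (x (n+1)) p ^ 2 := hsum n
  have hgap : ∀ i, i ≤ m → Tendsto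
      (fun n => dist (x n) (compUpTo R i (x n))) atTop (nhds 0) := by
    intro i
    induction i with
    | zero =>
      intro _
      have : (fun n => dist (x n) (compUpTo R 0 (x n))) = fun _ => (0:ℝ) := by
        funext n; simp [compUpTo]
      rw [this]
      exact tendsto_const_nhds
    | succ i ih =>
      intro hi
      have hi' : i < m := hi
      have h1 := ih (le_of_lt hi')
      have h2 := hDto i hi'
      have hsum2 : Tendsto (fun n => dist (x n) (compUpTo R i (x n))
          + dist (compUpTo R i (x n)) (compUpTo R (i+1) (x n))) atTop (nhds 0) := by
        simpa using h1.add h2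
      refine squeeze_zero (fun n => dist_nonneg) (fun n => ?_) hsum2
      exact dist_triangle _ _ _
  -- asymptotic center of the full sequence
  obtain ⟨z, hzc⟩ := aux_center_exists hmid' hcomp hbddx
  -- Claim A : centers of subsequences are common fixed points
  have claimA : ∀ ψ : ℕ → ℕ, StrictMono ψ → ∀ c : X,
      (∀ y, Lam (x ∘ ψ) c ≤ Lam (x ∘ ψ) y) → ∀ i, i < m → R i c = c := by
    intro ψ hψ c hc i hi
    set v : ℕ → X := fun n => compUpTo R i (x (ψ n)) with hv
    have hgapi : Tendsto (fun n => dist ((x ∘ ψ) n) (v n)) atTop (nhds 0) :=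
      (hgap i (le_of_lt hi)).comp hψ.tendsto_atTop
    have hbu : BddSeq (x ∘ ψ) := by
      refine ⟨2 * dist x₀ p, fun n => ?_⟩
      have h1 := hdle p hfix (ψ n)
      have h2 := hdle p hfix (ψ 0)
      have h3 := dist_triangle (x (ψ 0)) p (x (ψ n))
      rw [dist_comm p (x (ψ n))] at h3
      simp only [Function.comp_apply]
      linarith
    have hbv : BddSeq v := by
      refine ⟨2 * dist x₀ p, fun n => ?_⟩
      have h1 : dist (v n) p ≤ dist (x (ψ n)) p := hstageP i (le_of_lt hi) (x (ψ n))
      have h2 : dist (v 0) p ≤ dist (x (ψ 0)) p := hstageP i (le_of_lt hi) (x (ψ 0))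
      have h3 := dist_triangle (v 0) p (v n)
      rw [dist_comm p (v n)] at h3
      have h4 := hdle p hfix (ψ n)
      have h5 := hdle p hfix (ψ 0)
      linarith
    have hcv : ∀ y, Lam v c ≤ Lam v y := by
      intro y
      rw [← aux_lam_eq hbu hgapi c, ← aux_lam_eq hbu hgapi y]
      exact hc y
    have hev : Tendsto (fun n => dist (v n) (R i (v n))) atTop (nhds 0) := by
      have : (fun n => dist (v n) (R i (v n)))
          = fun n => dist (compUpTo R i (x (ψ n))) (compUpTo R (i+1) (x (ψ n))) := rfl
      rw [this]
      exact (hDto i hi).comp hψ.tendsto_atTop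
    exact aux_demiclosed hmid' (hlam i hi) (hR i hi) (hconv i hi) (hbot i hi) (hp i hi)
      (hptop i hi) hbv hcv hev
  have hzfix : ∀ i, i < m → R i z = z :=
    claimA id strictMono_id z (fun y => hzc y)
  obtain ⟨Lz, hLz⟩ := hlimq z hzfix
  have hLamxz : Lam x z = Lz ^ 2 := by
    apply Filter.Tendsto.limsup_eq
    have : (fun n => dist z (x n) ^ 2) = fun n => dist (x n) z ^ 2 := by
      funext n; rw [dist_comm]
    rw [this]
    exact hLz.pow 2
  -- Claim B : any center of a subsequence equals z
  have claimB : ∀ ψ : ℕ → ℕ, StrictMono ψ → ∀ c : X,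
      (∀ y, Lam (x ∘ ψ) c ≤ Lam (x ∘ ψ) y) → c = z := by
    intro ψ hψ c hc
    have hcfix := claimA ψ hψ c hc
    obtain ⟨Lc, hLc⟩ := hlimq c hcfix
    have hbu : BddSeq (x ∘ ψ) := by
      refine ⟨2 * dist x₀ p, fun n => ?_⟩
      have h1 := hdle p hfix (ψ n)
      have h2 := hdle p hfix (ψ 0)
      have h3 := dist_triangle (x (ψ 0)) p (x (ψ n))
      rw [dist_comm p (x (ψ n))] at h3
      simp only [Function.comp_apply]
      linarith
    have lamsub : ∀ (q : X) (Lq : ℝ), Tendsto (fun n => dist (x n) q) atTop (nhds Lq) →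
        Lam (x ∘ ψ) q = Lq ^ 2 := by
      intro q Lq hLq
      apply Filter.Tendsto.limsup_eq
      have h1 : Tendsto (fun n => dist (x (ψ n)) q) atTop (nhds Lq) :=
        hLq.comp hψ.tendsto_atTop
      have : (fun n => dist q ((x ∘ ψ) n) ^ 2) = fun n => dist (x (ψ n)) q ^ 2 := by
        funext n; rw [dist_comm]; rfl
      rw [this]
      exact h1.pow 2
    have hLamxc : Lam x c = Lc ^ 2 := by
      apply Filter.Tendsto.limsup_eq
      have : (fun n => dist c (x n) ^ 2) = fun n => dist (x n) c ^ 2 := by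
        funext n; rw [dist_comm]
      rw [this]
      exact hLc.pow 2
    have huz : Lam (x ∘ ψ) z = Lz ^ 2 := lamsub z Lz hLz
    have huc : Lam (x ∘ ψ) c = Lc ^ 2 := lamsub c Lc hLc
    have q1 := aux_center_quant hmid' hbddx hzc c
    have q2 := aux_center_quant hmid' hbu hc z
    rw [hLamxz, hLamxc] at q1
    rw [huz, huc] at q2
    rw [dist_comm c z] at q2
    have : dist z c ^ 2 ≤ 0 := by linarith
    have h0 : dist z c = 0 := by nlinarith [dist_nonneg (x := z) (y := c), sq_nonneg (dist z c)]
    exact (dist_eq_zero.mp h0).symm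
  refine ⟨z, ?_, ?_, ?_⟩
  · -- z minimizes the sum
    intro y
    apply Finset.sum_le_sum
    intro i hi
    have hi' := Finset.mem_range.mp hi
    exact aux_fixed_min hmid' (hlam i hi') (hR i hi') (hconv i hi') (hbot i hi')
      (hp i hi') (hptop i hi') (hzfix i hi') y
  · -- boundedness
    apply Bornology.IsBounded.subset (Metric.isBounded_closedBall (x := p) (r := dist x₀ p))
    rintro _ ⟨n, rfl⟩
    exact Metric.mem_closedBall.mpr (hdle p hfix n)
  · -- every subsequence has z as asymptotic center
    intro ψ hψ
    have hbu : BddSeq (x ∘ ψ) := by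
      refine ⟨2 * dist x₀ p, fun n => ?_⟩
      have h1 := hdle p hfix (ψ n)
      have h2 := hdle p hfix (ψ 0)
      have h3 := dist_triangle (x (ψ 0)) p (x (ψ n))
      rw [dist_comm p (x (ψ n))] at h3
      simp only [Function.comp_apply]
      linarith
    obtain ⟨c, hc⟩ := aux_center_exists hmid' hcomp hbu
    have hcz : c = z := claimB ψ hψ c hc
    rw [aux_center_iff hbu]
    rw [← hcz]
    exact hc
end
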